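/- arXiv:1809.02493 — 8 statements merged into one kernel-verified Lean document; each statement's English description precedes it below -/
import Mathlib

section
/- Let h : ℝⁿ → ℝⁿ be piecewise affine, and define the nonnegative matrix F̄ ∈ ℝ^{n×n} entrywise by F̄_{ij} := max_{λ∈Λ} |(F_λ)_{ij}|. Then for all c₁, c₂ ∈ ℝⁿ one has the entrywise inequality |h(c₁) − h(c₂)| ≤ F̄ |c₁ − c₂|. -/
open Matrix

/-- For a piecewise affine function `h : ℝⁿ → ℝⁿ` with pieces
`h c = F_λ c + f_λ` on polyhedra covering `ℝⁿ`, letting `F̄` be the entrywise maximum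
`F̄ i j = max_λ |(F_λ) i j|`, one has the entrywise bound `|h c₁ − h c₂| ≤ F̄ |c₁ − c₂|`. -/
theorem piecewise_affine_entrywise_bound
    {n : ℕ} {Λ : Type} [Fintype Λ]
    (h : (Fin n → ℝ) → (Fin n → ℝ))
    (k : Λ → ℕ)
    (F : Λ → Matrix (Fin n) (Fin n) ℝ) (f : Λ → (Fin n → ℝ))
    (G : ∀ l : Λ, Matrix (Fin (k l)) (Fin n) ℝ) (g : ∀ l : Λ, Fin (k l) → ℝ)
    (hpiece : ∀ (l : Λ) (c : Fin n → ℝ),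
      (∀ i, 0 ≤ ((G l).mulVec c + g l) i) → h c = (F l).mulVec c + f l)
    (hcover : ∀ c : Fin n → ℝ, ∃ l : Λ, ∀ i, 0 ≤ ((G l).mulVec c + g l) i)
    (Fbar : Matrix (Fin n) (Fin n) ℝ)
    (hFbar : ∀ i j, Fbar i j = ⨆ l : Λ, |F l i j|) :
    ∀ c₁ c₂ : Fin n → ℝ, ∀ i,
      |h c₁ i - h c₂ i| ≤ Fbar.mulVec (fun j => |c₁ j - c₂ j|) i := by
  intro c₁ c₂
  open Filter Topology in
  -- the segment and the bound vector
  set v : Fin n → ℝ := fun j => |c₁ j - c₂ j| with hv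
  set c : ℝ → (Fin n → ℝ) := fun t => fun j => c₁ j + t * (c₂ j - c₁ j) with hc
  set w : Fin n → ℝ := Fbar.mulVec v with hw
  -- entrywise domination of each F l by Fbar
  have hFb : ∀ l i j, |F l i j| ≤ Fbar i j := by
    intro l i j
    rw [hFbar]
    exact le_ciSup (Set.Finite.bddAbove (Set.finite_range fun l => |F l i j|)) l
  -- Lemma A : bound for two points in the same piece
  have hA : ∀ (l : Λ) (x y : Fin n → ℝ),
      (∀ i, 0 ≤ ((G l).mulVec x + g l) i) → (∀ i, 0 ≤ ((G l).mulVec y + g l) i) →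
      ∀ i, |h x i - h y i| ≤ Fbar.mulVec (fun j => |x j - y j|) i := by
    intro l x y hx hy i
    rw [hpiece l x hx, hpiece l y hy]
    simp only [Pi.add_apply, Matrix.mulVec, dotProduct]
    have : (∑ j, F l i j * x j + f l i) - (∑ j, F l i j * y j + f l i)
        = ∑ j, F l i j * (x j - y j) := by
      rw [add_sub_add_right_eq_sub, ← Finset.sum_sub_distrib]
      exact Finset.sum_congr rfl fun j _ => (mul_sub _ _ _).symm
    rw [this]
    refine (Finset.abs_sum_le_sum_abs _ _).trans (Finset.sum_le_sum fun j _ => ?_)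
    rw [abs_mul]
    exact mul_le_mul_of_nonneg_right (hFb l i j) (abs_nonneg _)
  -- Lemma B : bound for two points of the segment in the same piece
  have hB : ∀ (l : Λ) (t s : ℝ),
      (∀ i, 0 ≤ ((G l).mulVec (c t) + g l) i) → (∀ i, 0 ≤ ((G l).mulVec (c s) + g l) i) →
      ∀ i, |h (c t) i - h (c s) i| ≤ |t - s| * w i := by
    intro l t s ht hs i
    have habs : (fun j => |c t j - c s j|) = |t - s| • v := by
      funext j
      have : c t j - c s j = (t - s) * (c₂ j - c₁ j) := by simp [hc]; ring
      rw [this, abs_mul]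
      simp [hv, abs_sub_comm (c₁ j) (c₂ j)]
    have := hA l (c t) (c s) ht hs i
    rwa [habs, Matrix.mulVec_smul, Pi.smul_apply, smul_eq_mul] at this
  -- membership in a piece is a closed condition along the segment
  have hQclosed : ∀ (l : Λ) (X : Set ℝ) (s : ℝ),
      (∃ᶠ t in 𝓝[X] s, ∀ i, 0 ≤ ((G l).mulVec (c t) + g l) i) →
      ∀ i, 0 ≤ ((G l).mulVec (c s) + g l) i := by
    intro l X s hf
    have hcont : ∀ i, Continuous fun t => ((G l).mulVec (c t) + g l) i := by
      intro i
      simp only [Pi.add_apply, Matrix.mulVec, dotProduct, hc]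
      exact (continuous_finset_sum _ fun j _ => by fun_prop).add continuous_const
    have hclosed : IsClosed {t : ℝ | ∀ i, 0 ≤ ((G l).mulVec (c t) + g l) i} := by
      have : {t : ℝ | ∀ i, 0 ≤ ((G l).mulVec (c t) + g l) i}
          = ⋂ i, {t : ℝ | 0 ≤ ((G l).mulVec (c t) + g l) i} := by
        ext t; simp [Set.mem_iInter]
      rw [this]
      exact isClosed_iInter fun i => isClosed_le continuous_const (hcont i)
    have : s ∈ closure {t : ℝ | ∀ i, 0 ≤ ((G l).mulVec (c t) + g l) i} :=
      mem_closure_iff_frequently.2 (hf.filter_mono nhdsWithin_le_nhds)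
    exact hclosed.closure_subset this
  -- pigeonhole over the finitely many pieces
  have hpigeon : ∀ (L : Filter ℝ) (_ : L.NeBot),
      ∃ l : Λ, ∃ᶠ t in L, ∀ i, 0 ≤ ((G l).mulVec (c t) + g l) i := by
    intro L hL
    by_contra hcon
    simp only [not_exists, Filter.not_frequently] at hcon
    have hall : ∀ᶠ t in L, ∀ l : Λ, ¬ ∀ i, 0 ≤ ((G l).mulVec (c t) + g l) i :=
      Filter.eventually_all.2 hcon
    rcases (hall.and (Filter.Eventually.of_forall fun t => hcover (c t))).exists with ⟨t, h1, l, h2⟩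
    exact h1 l h2
  -- the good set
  set S : Set ℝ := {t | t ∈ Set.Icc (0:ℝ) 1 ∧ ∀ i, |h (c t) i - h c₁ i| ≤ t * w i} with hS
  have hc0 : c 0 = c₁ := by funext j; simp [hc]
  have hc1 : c 1 = c₂ := by funext j; simp [hc]
  have h0S : (0:ℝ) ∈ S := by
    refine ⟨by simp, fun i => ?_⟩
    rw [hc0]
    simp
  have hSne : S.Nonempty := ⟨0, h0S⟩
  have hSbdd : BddAbove S := ⟨1, fun t ht => ht.1.2⟩
  set s : ℝ := sSup S with hsdef
  have hs0 : 0 ≤ s := le_csSup hSbdd h0S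
  have hs1 : s ≤ 1 := csSup_le hSne fun t ht => ht.1.2
  have hsclos : (𝓝[S] s).NeBot :=
    mem_closure_iff_nhdsWithin_neBot.1 (csSup_mem_closure hSne hSbdd)
  -- step 1 : s ∈ S
  have hsS : s ∈ S := by
    obtain ⟨l, hfreq⟩ := hpigeon (𝓝[S] s) hsclos
    have hQs := hQclosed l S s hfreq
    refine ⟨⟨hs0, hs1⟩, fun i => ?_⟩
    have hkey : ∃ᶠ t in 𝓝[S] s, |h (c s) i - h c₁ i| ≤ |s - t| * w i + t * w i := by
      refine (hfreq.and_eventually self_mem_nhdsWithin).mono ?_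
      rintro t ⟨hQt, htS⟩
      calc |h (c s) i - h c₁ i|
          ≤ |h (c s) i - h (c t) i| + |h (c t) i - h c₁ i| := abs_sub_le _ _ _
        _ ≤ |s - t| * w i + t * w i :=
            add_le_add (hB l s t hQs hQt i) (htS.2 i)
    by_contra hlt
    push_neg at hlt
    have htend : Filter.Tendsto (fun t : ℝ => |s - t| * w i + t * w i) (𝓝[S] s)
        (𝓝 (s * w i)) := by
      have : Filter.Tendsto (fun t : ℝ => |s - t| * w i + t * w i) (𝓝 s)
          (𝓝 (|s - s| * w i + s * w i)) :=
        (((continuous_const.sub continuous_id).abs.mul continuous_const).add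
          (continuous_id.mul continuous_const)).tendsto s
      simpa using this.mono_left nhdsWithin_le_nhds
    have hev := htend.eventually_lt_const hlt
    rcases (hkey.and_eventually hev).exists with ⟨t, h1, h2⟩
    linarith
  -- step 2 : s = 1, else we could extend past the sup
  have hs_eq : s = 1 := by
    by_contra hne
    have hslt : s < 1 := lt_of_le_of_ne hs1 hne
    have : (𝓝[Set.Ioi s] s).NeBot := inferInstance
    obtain ⟨l, hfreq⟩ := hpigeon (𝓝[Set.Ioi s] s) this
    have hQs := hQclosed l (Set.Ioi s) s hfreq
    have hev1 : ∀ᶠ t in 𝓝[Set.Ioi s] s, t < 1 :=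
      eventually_nhdsWithin_of_eventually_nhds (Filter.Tendsto.eventually_lt_const hslt Filter.tendsto_id)
    have hev2 : ∀ᶠ t in 𝓝[Set.Ioi s] s, s < t := self_mem_nhdsWithin
    rcases ((hfreq.and_eventually (hev1.and hev2)).exists) with ⟨t, hQt, ht1, hst⟩
    have htS : t ∈ S := by
      refine ⟨⟨le_of_lt (lt_of_le_of_lt hs0 hst), le_of_lt ht1⟩, fun i => ?_⟩
      calc |h (c t) i - h c₁ i|
          ≤ |h (c t) i - h (c s) i| + |h (c s) i - h c₁ i| := abs_sub_le _ _ _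
        _ ≤ |t - s| * w i + s * w i := add_le_add (hB l t s hQt hQs i) (hsS.2 i)
        _ = t * w i := by rw [abs_of_pos (by linarith)]; ring
    exact absurd (le_csSup hSbdd htS) (not_le.2 hst)
  -- conclusion
  intro i
  have := hsS.2 i
  rw [hs_eq, hc1, one_mul] at this
  calc |h c₁ i - h c₂ i| = |h c₂ i - h c₁ i| := abs_sub_comm _ _
    _ ≤ w i := this
end

section
/- Let W ∈ ℝ^{n×n} and m ∈ ((0,∞])ⁿ, and for each d ∈ ℝⁿ let h(d) := {x ∈ ℝⁿ : x ≥ 0 and x = [W x + d]₀^m} be the set of equilibria of the linear-threshold dynamics τ ẋ = −x + [W x + d]₀^m. Suppose h(d) is a singleton for every d ∈ ℝⁿ, and regard h as a function ℝⁿ → ℝⁿ. Then h is globally Lipschitz on ℝⁿ. -/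
open Matrix

/-- Saturation `[x]₀^m = min{max{x,0}, m}` where the upper bound `m ∈ (0,∞]` is an
extended nonnegative real (`m = ⊤` means no upper saturation). -/
noncomputable def clampE (m : ENNReal) (x : ℝ) : ℝ :=
  if m = ⊤ then max x 0 else min (max x 0) m.toReal

/-- The Euclidean (`ℓ²`) norm of a vector in `Fin n → ℝ`. -/
noncomputable def euclNorm {n : ℕ} (v : Fin n → ℝ) : ℝ :=
  ‖(WithLp.equiv 2 (Fin n → ℝ)).symm v‖

lemma clampE_nonneg (m : ENNReal) (x : ℝ) : 0 ≤ clampE m x := by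
  unfold clampE; split_ifs with hm
  · exact le_max_right _ _
  · exact le_min (le_max_right _ _) ENNReal.toReal_nonneg

lemma clampE_le_toReal (m : ENNReal) (x : ℝ) (hm : m ≠ ⊤) : clampE m x ≤ m.toReal := by
  unfold clampE; rw [if_neg hm]; exact min_le_right _ _

lemma clampE_eq_self (m : ENNReal) (x : ℝ) (hx : 0 ≤ x) (hxm : m ≠ ⊤ → x ≤ m.toReal) :
    clampE m x = x := by
  unfold clampE; split_ifs with hm
  · exact max_eq_left hx
  · rw [max_eq_left hx, min_eq_left (hxm hm)]

lemma clampE_of_nonpos (m : ENNReal) (x : ℝ) (hx : x ≤ 0) : clampE m x = 0 := by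
  unfold clampE; split_ifs with hm
  · exact max_eq_right hx
  · rw [max_eq_right hx, min_eq_left ENNReal.toReal_nonneg]

lemma clampE_vi (m : ENNReal) (a z : ℝ) (hz : 0 ≤ z) (hzm : m ≠ ⊤ → z ≤ m.toReal) :
    (a - clampE m a) * (z - clampE m a) ≤ 0 := by
  unfold clampE; split_ifs with hm
  · rcases le_or_gt a 0 with h | h
    · rw [max_eq_right h]; nlinarith
    · rw [max_eq_left h.le]; simp
  · have hc : (0:ℝ) ≤ m.toReal := ENNReal.toReal_nonneg
    have hzc : z ≤ m.toReal := hzm hm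
    rcases le_or_gt a 0 with h | h
    · rw [max_eq_right h, min_eq_left hc]; nlinarith
    · rw [max_eq_left h.le]
      rcases le_or_gt a m.toReal with h2 | h2
      · rw [min_eq_left h2]; simp
      · rw [min_eq_right h2.le]; nlinarith

lemma clampE_proj (m : ENNReal) (a b : ℝ) :
    (clampE m a - clampE m b) ^ 2 ≤ (clampE m a - clampE m b) * (a - b) := by
  have h1 := clampE_vi m a (clampE m b) (clampE_nonneg m b) (clampE_le_toReal m b)
  have h2 := clampE_vi m b (clampE m a) (clampE_nonneg m a) (clampE_le_toReal m a)
  nlinarith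

lemma Pprop {n : ℕ} (W : Matrix (Fin n) (Fin n) ℝ)
    (m : Fin n → ENNReal) (hm : ∀ i, 0 < m i)
    (h : (Fin n → ℝ) → (Fin n → ℝ))
    (huniq : ∀ (d x : Fin n → ℝ), (∀ i, 0 ≤ x i) →
      (x = fun i => clampE (m i) ((W.mulVec x + d) i)) → x = h d) :
    ∀ v : Fin n → ℝ, v ≠ 0 → ∃ i, 0 < v i * (v i - W.mulVec v i) := by
  intro v hv
  by_contra hcon
  push_neg at hcon
  obtain ⟨i₀, hi₀⟩ := Function.ne_iff.1 hv
  -- bounds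
  set T : Fin n → ℝ := fun i => if m i = ⊤ then 1 else (m i).toReal with hT
  have hTpos : ∀ i, 0 < T i := by
    intro i; simp only [hT]; split_ifs with hmi
    · exact one_pos
    · exact ENNReal.toReal_pos (hm i).ne' hmi
  set Tm : ℝ := Finset.univ.inf' ⟨i₀, Finset.mem_univ _⟩ T with hTm
  have hTmpos : 0 < Tm := by
    rw [hTm]; exact (Finset.lt_inf'_iff _).2 fun i _ => hTpos i
  have hTmle : ∀ i, Tm ≤ T i := fun i => Finset.inf'_le _ (Finset.mem_univ i)
  set δ : ℝ := Tm / (2 * (1 + ‖v‖)) with hδdef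
  have hδ : 0 < δ := by
    apply div_pos hTmpos; positivity
  set w : Fin n → ℝ := δ • v with hwdef
  have hwb : ∀ i, |w i| < T i := by
    intro i
    have h1 : |v i| ≤ ‖v‖ := by
      rw [← Real.norm_eq_abs]; exact norm_le_pi_norm v i
    have h2 : |w i| = δ * |v i| := by
      rw [hwdef, Pi.smul_apply, smul_eq_mul, abs_mul, abs_of_pos hδ]
    have h3 : δ * |v i| ≤ Tm / 2 := by
      rw [hδdef, div_mul_eq_mul_div, div_le_div_iff₀ (by positivity) two_pos]
      nlinarith [norm_nonneg v, abs_nonneg (v i)]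
    have : Tm / 2 < T i := by linarith [hTmle i]
    linarith [h2 ▸ h3]
  have hw0 : w ≠ 0 := smul_ne_zero hδ.ne' hv
  have hWw : W.mulVec w = δ • W.mulVec v := Matrix.mulVec_smul W δ v
  have hMw : ∀ i, w i * (w i - W.mulVec w i) ≤ 0 := by
    intro i
    have : w i * (w i - W.mulVec w i) = δ ^ 2 * (v i * (v i - W.mulVec v i)) := by
      rw [hwdef, hWw]; simp only [Pi.smul_apply, smul_eq_mul]; ring
    rw [this]
    exact mul_nonpos_of_nonneg_of_nonpos (sq_nonneg δ) (hcon i)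
  -- construction
  set u : Fin n → ℝ := W.mulVec w with hu
  set x : Fin n → ℝ := fun i => max (w i) 0 with hx
  set y : Fin n → ℝ := fun i => max (-w i) 0 with hy
  set a : Fin n → ℝ := fun i =>
    if 0 < w i then w i else if w i < 0 then -(w i - u i) else -|u i| with ha
  set d : Fin n → ℝ := a - W.mulVec x with hd
  have hWxd : W.mulVec x + d = a := by rw [hd]; abel
  have hxyw : x - y = w := by
    funext i
    simp only [Pi.sub_apply, hx, hy]
    rcases le_total (w i) 0 with hw | hw
    · rw [max_eq_right hw, max_eq_left (by linarith)]; ring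
    · rw [max_eq_left hw, max_eq_right (by linarith)]; ring
  have hWyd : W.mulVec y + d = a - u := by
    have hyxw : y = x - w := by rw [← hxyw]; abel
    rw [hyxw, Matrix.mulVec_sub, hd, hu]; abel
  have hTle : ∀ i, m i ≠ ⊤ → T i = (m i).toReal := by
    intro i hi; simp only [hT, if_neg hi]
  -- x is a fixed point
  have hxfix : x = fun i => clampE (m i) ((W.mulVec x + d) i) := by
    funext i
    rw [hWxd]
    simp only [hx, ha]
    rcases lt_trichotomy (w i) 0 with hwi | hwi | hwi
    · rw [if_neg (by linarith), if_pos hwi, max_eq_right hwi.le]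
      have hMwi : 0 ≤ w i - u i := by nlinarith [hMw i]
      rw [clampE_of_nonpos _ _ (by linarith)]
    · rw [if_neg (by simp [hwi]), if_neg (by simp [hwi]), hwi, max_self]
      rw [clampE_of_nonpos _ _ (neg_nonpos.2 (abs_nonneg _))]
    · rw [if_pos hwi, max_eq_left hwi.le]
      refine (clampE_eq_self _ _ hwi.le fun hmi => ?_).symm
      have := hwb i
      rw [hTle i hmi] at this
      calc w i ≤ |w i| := le_abs_self _
        _ ≤ (m i).toReal := this.le
  -- y is a fixed point
  have hyfix : y = fun i => clampE (m i) ((W.mulVec y + d) i) := by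
    funext i
    rw [hWyd]
    simp only [hy, ha, Pi.sub_apply]
    rcases lt_trichotomy (w i) 0 with hwi | hwi | hwi
    · rw [if_neg (by linarith), if_pos hwi, max_eq_left (by linarith)]
      have : -(w i - u i) - u i = -w i := by ring
      rw [this]
      refine (clampE_eq_self _ _ (by linarith) fun hmi => ?_).symm
      have := hwb i
      rw [hTle i hmi] at this
      calc -w i ≤ |w i| := neg_le_abs _
        _ ≤ (m i).toReal := this.le
    · rw [if_neg (by simp [hwi]), if_neg (by simp [hwi]), hwi, neg_zero, max_self]
      rw [clampE_of_nonpos _ _ (by linarith [neg_abs_le (u i)])]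
    · rw [if_pos hwi, max_eq_right (by linarith)]
      have hMwi : w i - u i ≤ 0 := by nlinarith [hMw i]
      rw [clampE_of_nonpos _ _ (by linarith)]
  have hx0 : ∀ i, 0 ≤ x i := fun i => le_max_right _ _
  have hy0 : ∀ i, 0 ≤ y i := fun i => le_max_right _ _
  have hxh := huniq d x hx0 hxfix
  have hyh := huniq d y hy0 hyfix
  have : w = 0 := by rw [← hxyw, hxh, hyh]; simp
  exact hw0 this

lemma euclNorm_eq {n : ℕ} (v : Fin n → ℝ) :
    euclNorm v = Real.sqrt (∑ i, (v i) ^ 2) := by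
  rw [euclNorm, EuclideanSpace.norm_eq]
  congr 1
  refine Finset.sum_congr rfl fun i _ => ?_
  rw [Real.norm_eq_abs, sq_abs]; rfl

lemma norm_le_euclNorm {n : ℕ} (v : Fin n → ℝ) : ‖v‖ ≤ euclNorm v := by
  rw [euclNorm_eq]
  refine pi_norm_le_iff_of_nonneg (Real.sqrt_nonneg _) |>.2 fun i => ?_
  rw [Real.norm_eq_abs, ← Real.sqrt_sq_eq_abs]
  exact Real.sqrt_le_sqrt (Finset.single_le_sum (fun j _ => sq_nonneg (v j)) (Finset.mem_univ i))

lemma euclNorm_le {n : ℕ} (v : Fin n → ℝ) : euclNorm v ≤ Real.sqrt n * ‖v‖ := by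
  rw [euclNorm_eq]
  have h1 : ∑ i, (v i) ^ 2 ≤ (n : ℝ) * ‖v‖ ^ 2 := by
    calc ∑ i, (v i) ^ 2 ≤ ∑ _i : Fin n, ‖v‖ ^ 2 := by
          refine Finset.sum_le_sum fun i _ => ?_
          have : |v i| ≤ ‖v‖ := by rw [← Real.norm_eq_abs]; exact norm_le_pi_norm v i
          nlinarith [abs_nonneg (v i), sq_abs (v i)]
      _ = (n : ℝ) * ‖v‖ ^ 2 := by simp [Finset.sum_const, mul_comm]
  calc Real.sqrt (∑ i, (v i) ^ 2) ≤ Real.sqrt ((n : ℝ) * ‖v‖ ^ 2) := Real.sqrt_le_sqrt h1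
    _ = Real.sqrt n * ‖v‖ := by
        rw [Real.sqrt_mul (Nat.cast_nonneg n), Real.sqrt_sq (norm_nonneg v)]

lemma euclNorm_zero {n : ℕ} : euclNorm (0 : Fin n → ℝ) = 0 := by
  rw [euclNorm_eq]; simp

/-- If the equilibrium map `h(d) = {x ≥ 0 : x = [W x + d]₀^m}` of the
linear-threshold dynamics is single-valued on `ℝⁿ` (here: `h d` is an equilibrium for every
`d`, and it is the unique one), then `h` is globally Lipschitz on `ℝⁿ`. -/
theorem equilibrium_map_globally_lipschitz
    {n : ℕ} (W : Matrix (Fin n) (Fin n) ℝ)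
    (m : Fin n → ENNReal) (hm : ∀ i, 0 < m i)
    (h : (Fin n → ℝ) → (Fin n → ℝ))
    (hfix : ∀ d : Fin n → ℝ, (∀ i, 0 ≤ h d i) ∧
      h d = fun i => clampE (m i) ((W.mulVec (h d) + d) i))
    (huniq : ∀ (d x : Fin n → ℝ), (∀ i, 0 ≤ x i) →
      (x = fun i => clampE (m i) ((W.mulVec x + d) i)) → x = h d) :
    ∃ L : ℝ, 0 ≤ L ∧ ∀ d d' : Fin n → ℝ,
      euclNorm (h d - h d') ≤ L * euclNorm (d - d') := by
  rcases isEmpty_or_nonempty (Fin n) with hemp | hne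
  · refine ⟨0, le_refl 0, fun d d' => ?_⟩
    have hz : h d - h d' = 0 := Subsingleton.elim _ _
    rw [hz, euclNorm_zero, zero_mul]
  · obtain ⟨i₀⟩ := hne
    have hP := Pprop W m hm h huniq
    -- the continuous "P-function"
    set g : Fin n → (Fin n → ℝ) → ℝ := fun i v => v i * (v i - W.mulVec v i) with hg
    have hgc : ∀ i, Continuous (g i) := by
      intro i
      have hmv : Continuous fun v : Fin n → ℝ => W.mulVec v i := by
        have : Continuous fun v : Fin n → ℝ => W.mulVec v :=
          LinearMap.continuous_of_finiteDimensional W.mulVecLin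
        exact (continuous_apply i).comp this
      exact (continuous_apply i).mul ((continuous_apply i).sub hmv)
    set f : (Fin n → ℝ) → ℝ :=
      fun v => Finset.univ.sup' ⟨i₀, Finset.mem_univ _⟩ (fun i => g i v) with hf
    have hfc : Continuous f :=
      Continuous.finset_sup'_apply ⟨i₀, Finset.mem_univ _⟩ fun i _ => hgc i
    have hS : IsCompact (Metric.sphere (0 : Fin n → ℝ) 1) := isCompact_sphere _ _
    have hSne : (Metric.sphere (0 : Fin n → ℝ) 1).Nonempty := by
      have : Nonempty (Fin n) := ⟨i₀⟩
      refine ⟨fun _ => 1, ?_⟩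
      rw [mem_sphere_zero_iff_norm]
      exact pi_norm_const (1 : ℝ) |>.trans (norm_one)
    obtain ⟨v₀, hv₀S, hmin⟩ := hS.exists_isMinOn hSne hfc.continuousOn
    set c : ℝ := f v₀ with hc
    have hv₀n : ‖v₀‖ = 1 := mem_sphere_zero_iff_norm.1 hv₀S
    have hcpos : 0 < c := by
      have hv₀0 : v₀ ≠ 0 := by
        intro hh; rw [hh, norm_zero] at hv₀n; norm_num at hv₀n
      obtain ⟨i, hi⟩ := hP v₀ hv₀0
      have hle : g i v₀ ≤ c := Finset.le_sup' (fun j => g j v₀) (Finset.mem_univ i)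
      exact lt_of_lt_of_le hi hle
    -- key sup-norm Lipschitz bound
    have key : ∀ d d' : Fin n → ℝ, ‖h d - h d'‖ ≤ c⁻¹ * ‖d - d'‖ := by
      intro d d'
      set Δx : Fin n → ℝ := h d - h d' with hΔx
      set Δd : Fin n → ℝ := d - d' with hΔd
      by_cases hz : Δx = 0
      · rw [hz, norm_zero]; positivity
      -- coordinatewise projection inequality
      have hcoord : ∀ i, Δx i * (Δx i - W.mulVec Δx i) ≤ Δx i * Δd i := by
        intro i
        have e1 : h d i = clampE (m i) ((W.mulVec (h d) + d) i) := congrFun (hfix d).2 i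
        have e2 : h d' i = clampE (m i) ((W.mulVec (h d') + d') i) := congrFun (hfix d').2 i
        have hproj := clampE_proj (m i) ((W.mulVec (h d) + d) i) ((W.mulVec (h d') + d') i)
        rw [← e1, ← e2] at hproj
        have hdiff : (W.mulVec (h d) + d) i - (W.mulVec (h d') + d') i
            = W.mulVec Δx i + Δd i := by
          simp only [Pi.add_apply, hΔx, hΔd, Matrix.mulVec_sub, Pi.sub_apply]
          ring
        rw [hdiff] at hproj
        have hxi : Δx i = h d i - h d' i := by simp [hΔx]
        rw [← hxi] at hproj
        nlinarith [hproj]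
      set r : ℝ := ‖Δx‖ with hr
      have hrpos : 0 < r := norm_pos_iff.2 hz
      set v : Fin n → ℝ := r⁻¹ • Δx with hv
      have hvS : v ∈ Metric.sphere (0 : Fin n → ℝ) 1 := by
        rw [mem_sphere_zero_iff_norm, hv, norm_smul, norm_inv, norm_norm]
        exact inv_mul_cancel₀ hrpos.ne'
      have hcf : c ≤ f v := isMinOn_iff.1 hmin v hvS
      obtain ⟨i, _, hieq⟩ := Finset.exists_mem_eq_sup'
        (⟨i₀, Finset.mem_univ _⟩ : (Finset.univ : Finset (Fin n)).Nonempty)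
        (fun i => g i v)
      have hWv : W.mulVec v = r⁻¹ • W.mulVec Δx := Matrix.mulVec_smul W _ _
      have hgvi : g i v = r⁻¹ ^ 2 * (Δx i * (Δx i - W.mulVec Δx i)) := by
        simp only [hg, hv, hWv, Matrix.mulVec_smul, Pi.smul_apply, smul_eq_mul]; ring
      have hbound : Δx i * Δd i ≤ r * ‖Δd‖ := by
        have h1 : |Δx i| ≤ r := by rw [← Real.norm_eq_abs]; exact norm_le_pi_norm Δx i
        have h2 : |Δd i| ≤ ‖Δd‖ := by rw [← Real.norm_eq_abs]; exact norm_le_pi_norm Δd i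
        calc Δx i * Δd i ≤ |Δx i * Δd i| := le_abs_self _
          _ = |Δx i| * |Δd i| := abs_mul _ _
          _ ≤ r * ‖Δd‖ := by
              apply mul_le_mul h1 h2 (abs_nonneg _) hrpos.le
      have hchain : c ≤ r⁻¹ * ‖Δd‖ := by
        have : c ≤ r⁻¹ ^ 2 * (Δx i * Δd i) := by
          calc c ≤ f v := hcf
            _ = g i v := hieq
            _ = r⁻¹ ^ 2 * (Δx i * (Δx i - W.mulVec Δx i)) := hgvi
            _ ≤ r⁻¹ ^ 2 * (Δx i * Δd i) := by
                apply mul_le_mul_of_nonneg_left (hcoord i) (by positivity)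
        calc c ≤ r⁻¹ ^ 2 * (Δx i * Δd i) := this
          _ ≤ r⁻¹ ^ 2 * (r * ‖Δd‖) := mul_le_mul_of_nonneg_left hbound (by positivity)
          _ = r⁻¹ * ‖Δd‖ := by field_simp
      calc r = c⁻¹ * (c * r) := by field_simp
        _ ≤ c⁻¹ * ‖Δd‖ := by
            apply mul_le_mul_of_nonneg_left _ (by positivity)
            calc c * r ≤ (r⁻¹ * ‖Δd‖) * r := mul_le_mul_of_nonneg_right hchain hrpos.le
              _ = ‖Δd‖ := by field_simp
    refine ⟨Real.sqrt n * c⁻¹, by positivity, fun d d' => ?_⟩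
    calc euclNorm (h d - h d') ≤ Real.sqrt n * ‖h d - h d'‖ := euclNorm_le _
      _ ≤ Real.sqrt n * (c⁻¹ * ‖d - d'‖) := by
          apply mul_le_mul_of_nonneg_left (key d d') (Real.sqrt_nonneg _)
      _ ≤ Real.sqrt n * (c⁻¹ * euclNorm (d - d')) := by
          apply mul_le_mul_of_nonneg_left _ (Real.sqrt_nonneg _)
          apply mul_le_mul_of_nonneg_left (norm_le_euclNorm _) (by positivity)
      _ = Real.sqrt n * c⁻¹ * euclNorm (d - d') := by ring
end

section
/- Fix W ∈ ℝ^{n×n}, m ∈ (0,∞)ⁿ, and d ∈ ℝⁿ. For σ ∈ {0, ℓ, s}ⁿ let Σ^ℓ(σ) and Σ^s(σ) be the diagonal 0–1 matrices with (Σ^ℓ)_{ii} = 1 iff σ_i = ℓ and (Σ^s)_{ii} = 1 iff σ_i = s, and assume I − Σ^ℓ(σ) W is invertible for every σ ∈ {0, ℓ, s}ⁿ; set F_σ := (I − Σ^ℓ W)^{-1} Σ^ℓ and f_σ := (I − Σ^ℓ W)^{-1} Σ^s m. Then a vector x ∈ ℝⁿ satisfies x ≥ 0 and x = [W x + d]₀^m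 if and only if there exists σ ∈ {0, ℓ, s}ⁿ such that x = F_σ d + f_σ and, componentwise, (W x + d)_i ≤ 0 whenever σ_i = 0, 0 ≤ (W x + d)_i ≤ m_i whenever σ_i = ℓ, and (W x + d)_i ≥ m_i whenever σ_i = s. In particular, the equilibrium set {x ≥ 0 : x = [W x + d]₀^m} is a finite union of points of the affine form F_σ d + f_σ subject to finitely many affine inequality constraints on d. -/
open Matrix

/-- Characterization of the equilibria `x ≥ 0`, `x = [W x + d]₀^m` of a
linear-threshold network (with finite saturation bounds `m ∈ (0,∞)ⁿ`) as the piecewise affine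
family `x = F_σ d + f_σ` indexed by switching patterns `σ ∈ {0, ℓ, s}ⁿ` (encoded as
`σ : Fin n → Fin 3` with `0 ↦ 0`, `1 ↦ ℓ`, `2 ↦ s`), subject to the corresponding affine
inequality constraints.  Here `Σℓ = diag(1_{σ_i = ℓ})`, `Σs = diag(1_{σ_i = s})`,
`F_σ = (I − Σℓ W)⁻¹ Σℓ` and `f_σ = (I − Σℓ W)⁻¹ Σs m`. -/
theorem equilibria_piecewise_affine_characterization
    {n : ℕ} (W : Matrix (Fin n) (Fin n) ℝ)
    (m : Fin n → ℝ) (hm : ∀ i, 0 < m i) (d : Fin n → ℝ)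
    (hinv : ∀ σ : Fin n → Fin 3,
      IsUnit (1 - (Matrix.diagonal fun i => if σ i = 1 then (1:ℝ) else 0) * W))
    (x : Fin n → ℝ) :
    ((∀ i, 0 ≤ x i) ∧ x = fun i => min (max ((W.mulVec x + d) i) 0) (m i))
      ↔ ∃ σ : Fin n → Fin 3,
          (x = ((1 - (Matrix.diagonal fun i => if σ i = 1 then (1:ℝ) else 0) * W)⁻¹ *
                  (Matrix.diagonal fun i => if σ i = 1 then (1:ℝ) else 0)).mulVec d
               + (1 - (Matrix.diagonal fun i => if σ i = 1 then (1:ℝ) else 0) * W)⁻¹.mulVec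
                   ((Matrix.diagonal fun i => if σ i = 2 then (1:ℝ) else 0).mulVec m))
          ∧ ∀ i, (σ i = 0 → (W.mulVec x + d) i ≤ 0)
               ∧ (σ i = 1 → 0 ≤ (W.mulVec x + d) i ∧ (W.mulVec x + d) i ≤ m i)
               ∧ (σ i = 2 → m i ≤ (W.mulVec x + d) i) := by
  constructor
  · rintro ⟨hx0, hx⟩
    set y := W.mulVec x + d with hy
    refine ⟨fun i => if y i ≤ 0 then 0 else if y i ≤ m i then 1 else 2, ?_, ?_⟩
    · set σ : Fin n → Fin 3 := fun i => if y i ≤ 0 then 0 else if y i ≤ m i then 1 else 2 with hσ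
      set Sl := (Matrix.diagonal fun i => if σ i = 1 then (1:ℝ) else 0) with hSl
      set Ss := (Matrix.diagonal fun i => if σ i = 2 then (1:ℝ) else 0) with hSs
      set A := 1 - Sl * W with hA
      have hdet : IsUnit A.det := (Matrix.isUnit_iff_isUnit_det A).mp (hinv σ)
      have hkey : A.mulVec x = Sl.mulVec d + Ss.mulVec m := by
        funext i
        have hxi : x i = min (max (y i) 0) (m i) := congrFun hx i
        simp only [hA, Matrix.sub_mulVec, Matrix.one_mulVec, ← Matrix.mulVec_mulVec,
          hSl, hSs, Pi.add_apply, Matrix.mulVec_diagonal, Pi.sub_apply]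
        by_cases h0 : y i ≤ 0
        · have hs : σ i = 0 := by simp [hσ, h0]
          have hx0' : x i = 0 := by rw [hxi, max_eq_right h0, min_eq_left (hm i).le]
          simp [hs, hx0']
        · by_cases h1 : y i ≤ m i
          · have hs : σ i = 1 := by simp [hσ, h0, h1]
            have hxy : x i = y i := by
              rw [hxi, max_eq_left (le_of_not_ge h0), min_eq_left h1]
            have hd : x i - (W.mulVec x) i = d i := by
              rw [hxy, hy]; simp
            simp [hs, hd]
          · have hs : σ i = 2 := by simp [hσ, h0, h1]
            have hxm : x i = m i := by
              rw [hxi, max_eq_left (le_of_not_ge h0), min_eq_right (le_of_not_ge h1)]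
            simp [hs, hxm]
      have h2 : A⁻¹.mulVec (A.mulVec x) = A⁻¹.mulVec (Sl.mulVec d + Ss.mulVec m) := by
        rw [hkey]
      rw [Matrix.mulVec_mulVec, Matrix.nonsing_inv_mul A hdet, Matrix.one_mulVec] at h2
      rw [h2, Matrix.mulVec_add, ← Matrix.mulVec_mulVec]
    · intro i
      refine ⟨?_, ?_, ?_⟩ <;> intro h <;> simp only [] at h <;> split_ifs at h with h0 h1
      · exact h0
      · exact absurd h (by decide)
      · exact absurd h (by decide)
      · exact absurd h (by decide)
      · exact ⟨le_of_not_ge h0, h1⟩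
      · exact absurd h (by decide)
      · exact absurd h (by decide)
      · exact absurd h (by decide)
      · exact le_of_not_ge h1
  · rintro ⟨σ, hxeq, hcond⟩
    set Sl := (Matrix.diagonal fun i => if σ i = 1 then (1:ℝ) else 0) with hSl
    set Ss := (Matrix.diagonal fun i => if σ i = 2 then (1:ℝ) else 0) with hSs
    set A := 1 - Sl * W with hA
    have hdet : IsUnit A.det := (Matrix.isUnit_iff_isUnit_det A).mp (hinv σ)
    have hAx : A.mulVec x = Sl.mulVec d + Ss.mulVec m := by
      rw [hxeq, ← Matrix.mulVec_mulVec, ← Matrix.mulVec_add, Matrix.mulVec_mulVec,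
        Matrix.mul_nonsing_inv A hdet, Matrix.one_mulVec]
    have hcomp : ∀ i, x i - (if σ i = 1 then (1:ℝ) else 0) * (W.mulVec x) i
        = (if σ i = 1 then (1:ℝ) else 0) * d i + (if σ i = 2 then (1:ℝ) else 0) * m i := by
      intro i
      have := congrFun hAx i
      simpa [hA, Matrix.sub_mulVec, Matrix.one_mulVec, ← Matrix.mulVec_mulVec,
        hSl, hSs, Matrix.mulVec_diagonal, mul_ite, ite_mul] using this
    have hxi : ∀ i, x i = min (max ((W.mulVec x + d) i) 0) (m i) := by
      intro i
      have hc := hcond i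
      have hci := hcomp i
      have h3 : σ i = 0 ∨ σ i = 1 ∨ σ i = 2 := by omega
      rcases h3 with h | h | h
      · rw [h] at hci
        simp at hci
        rw [hci, max_eq_right (hc.1 h), min_eq_left (hm i).le]
      · rw [h] at hci
        simp at hci
        obtain ⟨ha, hb⟩ := hc.2.1 h
        rw [max_eq_left ha, min_eq_left hb]
        simp only [Pi.add_apply]
        linarith [hci]
      · rw [h] at hci
        simp at hci
        rw [hci, min_eq_right (le_max_of_le_left (hc.2.2 h))]
    refine ⟨fun i => ?_, funext hxi⟩
    rw [hxi i]
    exact le_min (le_max_right _ _) (hm i).le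
end

section
/- Let h : ℝⁿ → ℝⁿ be piecewise affine. Let W₁ ∈ ℝ^{n'×n'}, W₂ ∈ ℝ^{n'×n}, W₃ ∈ ℝ^{n×n'}, c̄ ∈ ℝⁿ, and m ∈ ((0,∞])^{n'}. Suppose that for every c' ∈ ℝ^{n'} the equation x = [W₁ x + W₂ h(W₃ x + c̄) + c']₀^m has a unique solution x ∈ ℝ^{n'}, and denote this solution by h'(c'). Then h' : ℝ^{n'} → ℝ^{n'} is itself piecewise affine: there exist a finite index set Λ' and, for each λ' ∈ Λ', a matrix F'_{λ'}, a matrix G'_{λ'}, and vectors f'_{λ'}, g'_{λ'} such that h'(c') = F'_{λ'} c' + f'_{λ'} for all c' ∈ Ψ'_{λ'} := {c' : G'_{λ'} c' + g'_{λ'} ≥ 0 componentwise}, and ⋃_{λ'∈Λ'} Ψ'_{λ'} = ℝ^{n'}. -/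
open Matrix

section Key
variable {V W : Type} [AddCommGroup V] [Module ℝ V] [AddCommGroup W] [Module ℝ W]

lemma graph_span_key {C : Set (V × W)} (hC : Convex ℝ C)
    (hg : ∀ p ∈ C, ∀ q ∈ C, p.1 = q.1 → p.2 = q.2) :
    ∀ u ∈ Submodule.span ℝ (C -ᵥ C), u.1 = 0 → u.2 = 0 := by
  classical
  intro u hu h1
  obtain ⟨c, hsupp, hsum⟩ := Submodule.mem_span_set.mp hu
  -- choose decompositions
  have hch : ∀ e : V × W, ∃ x y : V × W, e ∈ (C -ᵥ C) → x ∈ C ∧ y ∈ C ∧ x - y = e := by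
    intro e
    by_cases he : e ∈ (C -ᵥ C)
    · obtain ⟨x, hx, y, hy, hxy⟩ := he
      exact ⟨x, y, fun _ => ⟨hx, hy, hxy⟩⟩
    · exact ⟨0, 0, fun h => absurd h he⟩
  choose p q hpq using hch
  set s := c.support with hs
  have hdecomp : ∀ e ∈ s, p e ∈ C ∧ q e ∈ C ∧ p e - q e = e := by
    intro e he
    exact hpq e (hsupp he)
  have hu' : ∑ e ∈ s, c e • (p e - q e) = u := by
    rw [← hsum, Finsupp.sum]
    exact Finset.sum_congr rfl fun e he => by rw [(hdecomp e he).2.2]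
  set ap : V × W → ℝ := fun e => max (c e) 0 with hap
  set am : V × W → ℝ := fun e => max (-(c e)) 0 with ham
  have hapm : ∀ e, ap e - am e = c e := by
    intro e; simp only [hap, ham]
    rcases le_total (c e) 0 with h | h
    · rw [max_eq_right h, max_eq_left (by linarith)]; ring
    · rw [max_eq_left h, max_eq_right (by linarith)]; ring
  have hap0 : ∀ e, 0 ≤ ap e := fun e => le_max_right _ _
  have ham0 : ∀ e, 0 ≤ am e := fun e => le_max_right _ _
  set T := ∑ e ∈ s, (ap e + am e) with hT
  have hT0 : 0 ≤ T := Finset.sum_nonneg fun e _ => add_nonneg (hap0 e) (ham0 e)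
  rcases eq_or_lt_of_le hT0 with hTeq | hTpos
  · -- all coefficients zero
    have : ∀ e ∈ s, ap e + am e = 0 :=
      (Finset.sum_eq_zero_iff_of_nonneg fun e _ => add_nonneg (hap0 e) (ham0 e)).mp hTeq.symm
    have hc0 : ∀ e ∈ s, c e = 0 := by
      intro e he
      have h1 := this e he
      have := hap0 e; have := ham0 e
      have : ap e = 0 ∧ am e = 0 := ⟨by linarith, by linarith⟩
      rw [← hapm e, this.1, this.2]; ring
    have : u = 0 := by
      rw [← hu']
      exact Finset.sum_eq_zero fun e he => by rw [hc0 e he, zero_smul]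
    rw [this]; rfl
  · -- two convex combinations
    set t := s.disjSum s with ht
    set z : (V × W) ⊕ (V × W) → V × W := Sum.elim p q with hz
    set w₁ : (V × W) ⊕ (V × W) → ℝ := Sum.elim ap am with hw₁
    set w₂ : (V × W) ⊕ (V × W) → ℝ := Sum.elim am ap with hw₂
    have hzt : ∀ e ∈ t, z e ∈ C := by
      rintro (e | e) he
      · exact (hdecomp e (Finset.inl_mem_disjSum.mp he)).1
      · exact (hdecomp e (Finset.inr_mem_disjSum.mp he)).2.1
    have hsum1 : ∑ e ∈ t, w₁ e = T := by
      rw [ht, Finset.sum_disjSum, hT, ← Finset.sum_add_distrib]; rfl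
    have hsum2 : ∑ e ∈ t, w₂ e = T := by
      rw [ht, Finset.sum_disjSum, hT, ← Finset.sum_add_distrib]
      exact Finset.sum_congr rfl fun e _ => add_comm _ _
    have hdiff : (∑ e ∈ t, w₁ e • z e) - (∑ e ∈ t, w₂ e • z e) = u := by
      rw [ht, Finset.sum_disjSum, Finset.sum_disjSum, ← hu']
      have : ∀ e ∈ s, (ap e • p e + am e • q e) - (am e • p e + ap e • q e)
          = c e • (p e - q e) := by
        intro e _
        rw [← hapm e]; module
      rw [← Finset.sum_congr rfl this, Finset.sum_sub_distrib]
      congr 1 <;> rw [Finset.sum_add_distrib] <;> rfl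
    have hP1 : t.centerMass w₁ z ∈ C :=
      hC.centerMass_mem (fun e he => by rcases e with e|e <;> simp [hw₁, hap0, ham0])
        (by rw [hsum1]; exact hTpos) hzt
    have hP2 : t.centerMass w₂ z ∈ C :=
      hC.centerMass_mem (fun e he => by rcases e with e|e <;> simp [hw₂, hap0, ham0])
        (by rw [hsum2]; exact hTpos) hzt
    have hcm : t.centerMass w₁ z - t.centerMass w₂ z = T⁻¹ • u := by
      rw [Finset.centerMass, Finset.centerMass, hsum1, hsum2, ← smul_sub, hdiff]
    have hfst : (t.centerMass w₁ z).1 = (t.centerMass w₂ z).1 := by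
      have := congrArg Prod.fst hcm
      simp only [Prod.fst_sub, Prod.smul_fst, h1, smul_zero] at this
      exact sub_eq_zero.mp this
    have hsnd := hg _ hP1 _ hP2 hfst
    have : T⁻¹ • u.2 = 0 := by
      have := congrArg Prod.snd hcm
      simp only [Prod.snd_sub, Prod.smul_snd] at this
      rw [← this, hsnd, sub_self]
    have hTne : (T:ℝ)⁻¹ ≠ 0 := inv_ne_zero (ne_of_gt hTpos)
    exact (smul_eq_zero.mp this).resolve_left hTne
end Key

lemma affine_selection {N : ℕ} {C : Set ((Fin N → ℝ) × (Fin N → ℝ))} (hC : Convex ℝ C)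
    (hg : ∀ p ∈ C, ∀ q ∈ C, p.1 = q.1 → p.2 = q.2) :
    ∃ (F' : Matrix (Fin N) (Fin N) ℝ) (f' : Fin N → ℝ),
      ∀ p ∈ C, p.2 = F'.mulVec p.1 + f' := by
  classical
  rcases C.eq_empty_or_nonempty with hCe | ⟨z₀, hz₀⟩
  · exact ⟨0, 0, fun p hp => by rw [hCe] at hp; exact absurd hp (Set.notMem_empty p)⟩
  set U : Submodule ℝ ((Fin N → ℝ) × (Fin N → ℝ)) := Submodule.span ℝ (C -ᵥ C) with hU
  have hkey : ∀ u ∈ U, u.1 = 0 → u.2 = 0 := graph_span_key hC hg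
  set pr1 : U →ₗ[ℝ] (Fin N → ℝ) := (LinearMap.fst ℝ (Fin N → ℝ) (Fin N → ℝ)).comp U.subtype with hpr1
  set pr2 : U →ₗ[ℝ] (Fin N → ℝ) := (LinearMap.snd ℝ (Fin N → ℝ) (Fin N → ℝ)).comp U.subtype with hpr2
  have hker : LinearMap.ker pr1 ≤ LinearMap.ker pr2 := by
    intro u hu
    have h1 : (u : (Fin N → ℝ) × (Fin N → ℝ)).1 = 0 := hu
    exact hkey u u.2 h1
  set L₀ : (U ⧸ LinearMap.ker pr1) →ₗ[ℝ] (Fin N → ℝ) := (LinearMap.ker pr1).liftQ pr2 hker with hL₀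
  set e : (U ⧸ LinearMap.ker pr1) ≃ₗ[ℝ] LinearMap.range pr1 := pr1.quotKerEquivRange with he
  set L₁ : (LinearMap.range pr1) →ₗ[ℝ] (Fin N → ℝ) := L₀.comp e.symm.toLinearMap with hL₁
  obtain ⟨L, hL⟩ := LinearMap.exists_extend L₁
  have hLU : ∀ u ∈ U, L u.1 = u.2 := by
    intro u hu
    set uu : U := ⟨u, hu⟩ with huu
    have hmem : u.1 ∈ LinearMap.range pr1 := ⟨uu, rfl⟩
    have h1 : L u.1 = L₁ ⟨u.1, hmem⟩ := by
      have := congrArg (fun (φ : LinearMap.range pr1 →ₗ[ℝ] (Fin N → ℝ)) => φ ⟨u.1, hmem⟩) hL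
      simpa using this
    have h2 : e (Submodule.Quotient.mk uu) = ⟨u.1, hmem⟩ := by
      apply Subtype.ext
      exact pr1.quotKerEquivRange_apply_mk uu
    have h3 : e.symm ⟨u.1, hmem⟩ = Submodule.Quotient.mk uu := by
      rw [← h2, LinearEquiv.symm_apply_apply]
    rw [h1, hL₁]
    simp only [LinearMap.comp_apply, LinearEquiv.coe_toLinearMap, h3, hL₀]
    exact Submodule.liftQ_apply _ _ _
  refine ⟨LinearMap.toMatrix' L, z₀.2 - L z₀.1, fun p hp => ?_⟩
  have hmem : p - z₀ ∈ U := Submodule.subset_span (Set.vsub_mem_vsub hp hz₀)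
  have := hLU (p - z₀) hmem
  have hmv : (LinearMap.toMatrix' L).mulVec p.1 = L p.1 := by
    rw [← Matrix.toLin'_apply, Matrix.toLin'_toMatrix']
  rw [hmv]
  have hsub : L (p.1 - z₀.1) = p.2 - z₀.2 := this
  rw [map_sub] at hsub
  funext i
  have := congrFun hsub i
  simp only [Pi.sub_apply] at this
  simp only [Pi.add_apply, Pi.sub_apply]
  linarith

lemma package {N : ℕ} {J : Type} [Fintype J] (u v : J → (Fin N → ℝ)) (b : J → ℝ)
    (F' : Matrix (Fin N) (Fin N) ℝ) (f' : Fin N → ℝ) :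
    ∃ (K : ℕ) (G' : Matrix (Fin K) (Fin N) ℝ) (g' : Fin K → ℝ),
      ∀ c' : Fin N → ℝ, (∀ i, 0 ≤ (G'.mulVec c' + g') i) ↔
        ∀ j : J, 0 ≤ u j ⬝ᵥ c' + v j ⬝ᵥ (F'.mulVec c' + f') + b j := by
  classical
  refine ⟨Fintype.card J,
    Matrix.of (fun i => u ((Fintype.equivFin J).symm i)
      + Matrix.vecMul (v ((Fintype.equivFin J).symm i)) F'),
    fun i => v ((Fintype.equivFin J).symm i) ⬝ᵥ f' + b ((Fintype.equivFin J).symm i),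
    fun c' => ?_⟩
  have hval : ∀ i, (Matrix.of (fun i => u ((Fintype.equivFin J).symm i)
      + Matrix.vecMul (v ((Fintype.equivFin J).symm i)) F')).mulVec c' i
      + (v ((Fintype.equivFin J).symm i) ⬝ᵥ f' + b ((Fintype.equivFin J).symm i))
      = u ((Fintype.equivFin J).symm i) ⬝ᵥ c'
        + v ((Fintype.equivFin J).symm i) ⬝ᵥ (F'.mulVec c' + f')
        + b ((Fintype.equivFin J).symm i) := by
    intro i
    show (u ((Fintype.equivFin J).symm i) + Matrix.vecMul (v ((Fintype.equivFin J).symm i)) F')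
        ⬝ᵥ c' + _ = _
    rw [add_dotProduct, dotProduct_add, ← Matrix.dotProduct_mulVec]
    ring
  constructor
  · intro hi j
    have := hi ((Fintype.equivFin J) j)
    rw [Pi.add_apply, hval ((Fintype.equivFin J) j)] at this
    simpa using this
  · intro hj i
    rw [Pi.add_apply, hval i]
    exact hj _

/-- Value of an affine constraint `(u, v, b)` at a point `z = (c', x)`:
`u ⬝ c' + v ⬝ x + b`. -/
def cval {n' : ℕ} (t : (Fin n' → ℝ) × (Fin n' → ℝ) × ℝ)
    (z : (Fin n' → ℝ) × (Fin n' → ℝ)) : ℝ :=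
  t.1 ⬝ᵥ z.1 + t.2.1 ⬝ᵥ z.2 + t.2.2

lemma cval_convex {n' : ℕ} {J : Type} (fam : J → ((Fin n' → ℝ) × (Fin n' → ℝ) × ℝ)) :
    Convex ℝ {z : (Fin n' → ℝ) × (Fin n' → ℝ) | ∀ j, 0 ≤ cval (fam j) z} := by
  intro p hp q hq a b ha hb hab
  intro j
  have h1 := hp j
  have h2 := hq j
  have key : cval (fam j) (a • p + b • q) = a * cval (fam j) p + b * cval (fam j) q := by
    unfold cval
    simp only [Prod.fst_add, Prod.snd_add, Prod.smul_fst, Prod.smul_snd,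
      dotProduct_add, dotProduct_smul, smul_eq_mul]
    linear_combination (-(fam j).2.2) * hab
  rw [key]
  nlinarith [mul_nonneg ha h1, mul_nonneg hb h2]

lemma fin3_cases (t : Fin 3) : t = 0 ∨ t = 1 ∨ t = 2 := by
  fin_cases t <;> simp

lemma fin4_cases (t : Fin 4) : t = 0 ∨ t = 1 ∨ t = 2 ∨ t = 3 := by
  fin_cases t <;> simp

/-- The constraint family for one pattern piece. -/
noncomputable def famdef {n' K : ℕ} (A : Matrix (Fin K) (Fin n') ℝ) (bv : Fin K → ℝ)
    (M : Matrix (Fin n') (Fin n') ℝ) (d : Fin n' → ℝ) (m : Fin n' → ENNReal)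
    (s : Fin n' → Fin 3) : (Fin K ⊕ (Fin n' × Fin 4)) → ((Fin n' → ℝ) × (Fin n' → ℝ) × ℝ)
  | Sum.inl j => (0, A j, bv j)
  | Sum.inr (i, t) =>
    if s i = 0 then
      ![((0 : Fin n' → ℝ), Pi.single i (1:ℝ), (0:ℝ)), (0, -Pi.single i 1, 0),
        (-Pi.single i 1, -(M i), -(d i)), (0, 0, 0)] t
    else if s i = 1 then
      ![(Pi.single i (1:ℝ), M i - Pi.single i 1, d i),
        (-Pi.single i 1, Pi.single i 1 - M i, -(d i)),
        (0, Pi.single i 1, 0),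
        if m i = ⊤ then (0, 0, 0) else (0, -Pi.single i 1, (m i).toReal)] t
    else
      if m i = ⊤ then (0, 0, -1) else
      ![((0 : Fin n' → ℝ), Pi.single i (1:ℝ), -(m i).toReal), (0, -Pi.single i 1, (m i).toReal),
        (Pi.single i 1, M i, d i - (m i).toReal), (0, 0, 0)] t

/-- If `h : ℝⁿ → ℝⁿ` is piecewise affine and, for every `c' ∈ ℝ^{n'}`, the
equation `x = [W₁ x + W₂ h(W₃ x + c̄) + c']₀^m` has a unique solution `h'(c')`, then
`h' : ℝ^{n'} → ℝ^{n'}` is itself piecewise affine. -/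
theorem equilibrium_map_piecewise_affine
    {n n' : ℕ} {Λ : Type} [Fintype Λ]
    (h : (Fin n → ℝ) → (Fin n → ℝ))
    (k : Λ → ℕ)
    (F : Λ → Matrix (Fin n) (Fin n) ℝ) (f : Λ → (Fin n → ℝ))
    (G : ∀ l : Λ, Matrix (Fin (k l)) (Fin n) ℝ) (g : ∀ l : Λ, Fin (k l) → ℝ)
    (hpiece : ∀ (l : Λ) (c : Fin n → ℝ),
      (∀ i, 0 ≤ ((G l).mulVec c + g l) i) → h c = (F l).mulVec c + f l)
    (hcover : ∀ c : Fin n → ℝ, ∃ l : Λ, ∀ i, 0 ≤ ((G l).mulVec c + g l) i)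
    (W₁ : Matrix (Fin n') (Fin n') ℝ) (W₂ : Matrix (Fin n') (Fin n) ℝ)
    (W₃ : Matrix (Fin n) (Fin n') ℝ) (cbar : Fin n → ℝ)
    (m : Fin n' → ENNReal) (hm : ∀ i, 0 < m i)
    (h' : (Fin n' → ℝ) → (Fin n' → ℝ))
    (hfix : ∀ c' : Fin n' → ℝ, h' c' = fun i =>
      clampE (m i) ((W₁.mulVec (h' c') + W₂.mulVec (h (W₃.mulVec (h' c') + cbar)) + c') i))
    (huniq : ∀ (c' x : Fin n' → ℝ),
      (x = fun i =>
        clampE (m i) ((W₁.mulVec x + W₂.mulVec (h (W₃.mulVec x + cbar)) + c') i)) →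
      x = h' c') :
    ∃ (Λ' : Type) (_ : Fintype Λ') (k' : Λ' → ℕ)
      (F' : Λ' → Matrix (Fin n') (Fin n') ℝ) (f' : Λ' → (Fin n' → ℝ))
      (G' : ∀ l' : Λ', Matrix (Fin (k' l')) (Fin n') ℝ) (g' : ∀ l' : Λ', Fin (k' l') → ℝ),
      (∀ (l' : Λ') (c' : Fin n' → ℝ),
        (∀ i, 0 ≤ ((G' l').mulVec c' + g' l') i) → h' c' = (F' l').mulVec c' + f' l')
      ∧ (∀ c' : Fin n' → ℝ, ∃ l' : Λ', ∀ i, 0 ≤ ((G' l').mulVec c' + g' l') i) := by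
  classical
  -- Abbreviations for the affine data of the inner map composed with the pieces of `h`.
  set M : Λ → Matrix (Fin n') (Fin n') ℝ := fun l => W₁ + W₂ * F l * W₃ with hMdef
  set d : Λ → (Fin n' → ℝ) := fun l => W₂.mulVec ((F l).mulVec cbar + f l) with hddef
  set A : ∀ l : Λ, Matrix (Fin (k l)) (Fin n') ℝ := fun l => G l * W₃ with hAdef
  set bv : ∀ l : Λ, Fin (k l) → ℝ := fun l => (G l).mulVec cbar + g l with hbvdef
  have pre_eq : ∀ (l : Λ) (x c' : Fin n' → ℝ),
      W₁.mulVec x + W₂.mulVec ((F l).mulVec (W₃.mulVec x + cbar) + f l) + c'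
        = (M l).mulVec x + d l + c' := by
    intro l x c'
    simp only [hMdef, hddef, Matrix.mulVec_add, Matrix.add_mulVec, Matrix.mulVec_mulVec,
      ← Matrix.mul_assoc]
    abel
  have hAcomp : ∀ (l : Λ) (x : Fin n' → ℝ) (j : Fin (k l)),
      ((G l).mulVec (W₃.mulVec x + cbar) + g l) j = (A l) j ⬝ᵥ x + (bv l) j := by
    intro l x j
    simp only [hAdef, hbvdef, Pi.add_apply, Matrix.mulVec_add, Matrix.mulVec_mulVec]
    show ((G l * W₃).mulVec x) j + ((G l).mulVec cbar) j + g l j = _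
    rw [add_assoc]
    rfl
  -- Main lemma A: any point satisfying all the constraints of a pattern is on the graph of h'.
  have Qa : ∀ (l : Λ) (s : Fin n' → Fin 3) (c' x : Fin n' → ℝ),
      (∀ j, 0 ≤ cval (famdef (A l) (bv l) (M l) (d l) m s j) (c', x)) → x = h' c' := by
    intro l s c' x hcon
    have hGor : ∀ j, 0 ≤ ((G l).mulVec (W₃.mulVec x + cbar) + g l) j := by
      intro j
      have hc := hcon (Sum.inl j)
      rw [hAcomp l x j]
      simpa [famdef, cval] using hc
    have hhp : h (W₃.mulVec x + cbar) = (F l).mulVec (W₃.mulVec x + cbar) + f l :=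
      hpiece l _ hGor
    have harg : ∀ i, (W₁.mulVec x + W₂.mulVec (h (W₃.mulVec x + cbar)) + c') i
        = (M l) i ⬝ᵥ x + d l i + c' i := by
      intro i
      rw [hhp]
      have := congrFun (pre_eq l x c') i
      simpa [Matrix.mulVec] using this
    apply huniq c' x
    funext i
    rw [harg i]
    rcases fin3_cases (s i) with hsi | hsi | hsi
    · -- low saturation
      have c0 := hcon (Sum.inr (i, (0 : Fin 4)))
      have c1 := hcon (Sum.inr (i, (1 : Fin 4)))
      have c2 := hcon (Sum.inr (i, (2 : Fin 4)))
      simp only [famdef, hsi, if_true, cval, Matrix.cons_val_zero, Matrix.cons_val_one,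
        Matrix.head_cons, zero_dotProduct, single_dotProduct,
        neg_dotProduct, sub_dotProduct, one_mul, add_zero, zero_add,
        reduceIte, Fin.reduceEq, Matrix.cons_val_two, Matrix.tail_cons] at c0 c1 c2
      have hx0 : x i = 0 := by linarith
      have hPle : (M l) i ⬝ᵥ x + d l i + c' i ≤ 0 := by linarith
      rw [hx0]
      by_cases hmi : m i = ⊤
      · rw [clampE, if_pos hmi, max_eq_right hPle]
      · rw [clampE, if_neg hmi, max_eq_right hPle, min_eq_left ENNReal.toReal_nonneg]
    · -- no saturation
      have c0 := hcon (Sum.inr (i, (0 : Fin 4)))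
      have c1 := hcon (Sum.inr (i, (1 : Fin 4)))
      have c2 := hcon (Sum.inr (i, (2 : Fin 4)))
      simp only [famdef, hsi, if_true, cval, Matrix.cons_val_zero, Matrix.cons_val_one,
        Matrix.head_cons, zero_dotProduct, single_dotProduct,
        neg_dotProduct, sub_dotProduct, one_mul, add_zero, zero_add,
        reduceIte, Fin.reduceEq, Matrix.cons_val_two, Matrix.tail_cons] at c0 c1 c2
      have hxP : x i = (M l) i ⬝ᵥ x + d l i + c' i := by linarith
      by_cases hmi : m i = ⊤
      · rw [clampE, if_pos hmi, max_eq_left (by linarith)]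
        linarith
      · have c3 := hcon (Sum.inr (i, (3 : Fin 4)))
        simp only [famdef, hsi, if_true, cval, Matrix.cons_val_zero, Matrix.cons_val_one,
          Matrix.head_cons, zero_dotProduct, single_dotProduct,
          neg_dotProduct, sub_dotProduct, one_mul, add_zero, zero_add,
          hmi, if_false, reduceIte, Fin.reduceEq, Matrix.cons_val_two, Matrix.tail_cons,
          Matrix.cons_val_three] at c3
        rw [clampE, if_neg hmi, max_eq_left (by linarith), min_eq_left (by linarith)]
        linarith
    · -- high saturation
      by_cases hmi : m i = ⊤
      · have c0 := hcon (Sum.inr (i, (0 : Fin 4)))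
        simp only [famdef, hsi, cval, hmi, if_true, reduceIte, Fin.reduceEq, zero_dotProduct,
          zero_add, add_zero] at c0
        linarith
      · have c0 := hcon (Sum.inr (i, (0 : Fin 4)))
        have c1 := hcon (Sum.inr (i, (1 : Fin 4)))
        have c2 := hcon (Sum.inr (i, (2 : Fin 4)))
        simp only [famdef, hsi, cval, hmi, if_false, reduceIte, Fin.reduceEq, Matrix.cons_val_zero,
          Matrix.cons_val_one, Matrix.head_cons, zero_dotProduct,
          single_dotProduct, neg_dotProduct, sub_dotProduct, one_mul,
          add_zero, zero_add, Matrix.cons_val_two, Matrix.tail_cons] at c0 c1 c2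
        have htp : 0 < (m i).toReal := ENNReal.toReal_pos (hm i).ne' hmi
        rw [clampE, if_neg hmi, max_eq_left (by linarith), min_eq_right (by linarith)]
        linarith
  -- Main lemma B: the graph of h' is covered by the patterns.
  have Qb : ∀ c' : Fin n' → ℝ, ∃ (l : Λ) (s : Fin n' → Fin 3),
      ∀ j, 0 ≤ cval (famdef (A l) (bv l) (M l) (d l) m s j) (c', h' c') := by
    intro c'
    obtain ⟨l, hl⟩ := hcover (W₃.mulVec (h' c') + cbar)
    have hhp : h (W₃.mulVec (h' c') + cbar)
        = (F l).mulVec (W₃.mulVec (h' c') + cbar) + f l := hpiece l _ hl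
    have harg : ∀ i, (W₁.mulVec (h' c') + W₂.mulVec (h (W₃.mulVec (h' c') + cbar)) + c') i
        = (M l) i ⬝ᵥ (h' c') + d l i + c' i := by
      intro i
      rw [hhp]
      have := congrFun (pre_eq l (h' c') c') i
      simpa [Matrix.mulVec] using this
    have hx : ∀ i, h' c' i = clampE (m i) ((M l) i ⬝ᵥ (h' c') + d l i + c' i) := by
      intro i
      have := congrFun (hfix c') i
      rw [harg i] at this
      exact this
    have hper : ∀ i : Fin n', ∃ si : Fin 3, ∀ (s : Fin n' → Fin 3), s i = si →
        ∀ t : Fin 4,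
          0 ≤ cval (famdef (A l) (bv l) (M l) (d l) m s (Sum.inr (i, t))) (c', h' c') := by
      intro i
      by_cases h0 : (M l) i ⬝ᵥ (h' c') + d l i + c' i ≤ 0
      · refine ⟨0, fun s hs t => ?_⟩
        have hxi : h' c' i = 0 := by
          rw [hx i, clampE]
          by_cases hmi : m i = ⊤
          · rw [if_pos hmi, max_eq_right h0]
          · rw [if_neg hmi, max_eq_right h0, min_eq_left ENNReal.toReal_nonneg]
        rcases fin4_cases t with rfl | rfl | rfl | rfl <;>
          simp only [famdef, hs, if_true, reduceIte, Fin.reduceEq, cval,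
            Matrix.cons_val_zero, Matrix.cons_val_one, Matrix.head_cons,
            Matrix.cons_val_two, Matrix.tail_cons, Matrix.cons_val_three,
            zero_dotProduct, single_dotProduct, neg_dotProduct,
            sub_dotProduct, one_mul, add_zero, zero_add, neg_zero, Fin.isValue] <;>
          linarith [hxi, h0]
      · push_neg at h0
        by_cases h2 : m i ≠ ⊤ ∧ (m i).toReal ≤ (M l) i ⬝ᵥ (h' c') + d l i + c' i
        · refine ⟨2, fun s hs t => ?_⟩
          have hxi : h' c' i = (m i).toReal := by
            rw [hx i, clampE, if_neg h2.1, max_eq_left (le_of_lt h0), min_eq_right h2.2]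
          rcases fin4_cases t with rfl | rfl | rfl | rfl <;>
            simp only [famdef, hs, if_true, reduceIte, Fin.reduceEq, cval, h2.1,
              if_neg h2.1, Matrix.cons_val_zero, Matrix.cons_val_one, Matrix.head_cons,
              Matrix.cons_val_two, Matrix.tail_cons, Matrix.cons_val_three,
              zero_dotProduct, single_dotProduct, neg_dotProduct,
              sub_dotProduct, one_mul, add_zero, zero_add, neg_zero, Fin.isValue] <;>
            linarith [hxi, h2.2]
        · refine ⟨1, fun s hs t => ?_⟩
          have hxle : ∀ hmi : m i ≠ ⊤, (M l) i ⬝ᵥ (h' c') + d l i + c' i < (m i).toReal := by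
            intro hmi
            rcases not_and_or.mp h2 with hc | hc
            · exact absurd hmi (by simpa using hc)
            · exact not_le.mp hc
          have hxi : h' c' i = (M l) i ⬝ᵥ (h' c') + d l i + c' i := by
            rw [hx i, clampE]
            by_cases hmi : m i = ⊤
            · rw [if_pos hmi, max_eq_left (le_of_lt h0)]
            · rw [if_neg hmi, max_eq_left (le_of_lt h0), min_eq_left (le_of_lt (hxle hmi))]
          by_cases hmi : m i = ⊤
          · rcases fin4_cases t with rfl | rfl | rfl | rfl <;>
              simp only [famdef, hs, if_true, reduceIte, Fin.reduceEq, cval, hmi,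
                Matrix.cons_val_zero, Matrix.cons_val_one, Matrix.head_cons,
                Matrix.cons_val_two, Matrix.tail_cons, Matrix.cons_val_three,
                zero_dotProduct, single_dotProduct, neg_dotProduct,
                sub_dotProduct, one_mul, add_zero, zero_add, neg_zero, Fin.isValue] <;>
              linarith [hxi, h0]
          · rcases fin4_cases t with rfl | rfl | rfl | rfl <;>
              simp only [famdef, hs, if_true, reduceIte, Fin.reduceEq, cval, hmi, if_false,
                Matrix.cons_val_zero, Matrix.cons_val_one, Matrix.head_cons,
                Matrix.cons_val_two, Matrix.tail_cons, Matrix.cons_val_three,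
                zero_dotProduct, single_dotProduct, neg_dotProduct,
                sub_dotProduct, one_mul, add_zero, zero_add, neg_zero, Fin.isValue] <;>
              linarith [hxi, h0, hxle hmi]
    choose s₀ hs₀ using hper
    refine ⟨l, s₀, ?_⟩
    rintro (j | ⟨i, t⟩)
    · have := hl j
      rw [hAcomp l (h' c') j] at this
      simpa [famdef, cval] using this
    · exact hs₀ i s₀ rfl t
  -- Assembly.
  set Λ' := Λ × (Fin n' → Fin 3) with hΛ'
  set fam : ∀ l' : Λ', (Fin (k l'.1) ⊕ (Fin n' × Fin 4)) → ((Fin n' → ℝ) × (Fin n' → ℝ) × ℝ) :=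
    fun l' => famdef (A l'.1) (bv l'.1) (M l'.1) (d l'.1) m l'.2 with hfam
  have hsel : ∀ l' : Λ', ∃ (F₀ : Matrix (Fin n') (Fin n') ℝ) (f₀ : Fin n' → ℝ),
      ∀ z ∈ {z : (Fin n' → ℝ) × (Fin n' → ℝ) | ∀ j, 0 ≤ cval (fam l' j) z},
        z.2 = F₀.mulVec z.1 + f₀ := by
    intro l'
    apply affine_selection (cval_convex (fam l'))
    intro p hp q hq hpq
    have h1 : p.2 = h' p.1 := Qa l'.1 l'.2 p.1 p.2 (fun j => hp j)
    have h2 : q.2 = h' q.1 := Qa l'.1 l'.2 q.1 q.2 (fun j => hq j)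
    rw [h1, h2, hpq]
  choose F₀ f₀ hF₀ using hsel
  have hpack : ∀ l' : Λ', ∃ (K : ℕ) (G' : Matrix (Fin K) (Fin n') ℝ) (g' : Fin K → ℝ),
      ∀ c' : Fin n' → ℝ, (∀ i, 0 ≤ (G'.mulVec c' + g') i) ↔
        ∀ j, 0 ≤ (fam l' j).1 ⬝ᵥ c' + (fam l' j).2.1 ⬝ᵥ ((F₀ l').mulVec c' + f₀ l')
          + (fam l' j).2.2 :=
    fun l' => package (fun j => (fam l' j).1) (fun j => (fam l' j).2.1)
      (fun j => (fam l' j).2.2) (F₀ l') (f₀ l')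
  choose K G' g' hG' using hpack
  refine ⟨Λ', inferInstance, K, F₀, f₀, G', g', ?_, ?_⟩
  · intro l' c' hc'
    have hall : ∀ j, 0 ≤ cval (fam l' j) (c', (F₀ l').mulVec c' + f₀ l') :=
      fun j => (hG' l' c').mp hc' j
    have := Qa l'.1 l'.2 c' ((F₀ l').mulVec c' + f₀ l') hall
    exact this.symm
  · intro c'
    obtain ⟨l, s, hls⟩ := Qb c'
    refine ⟨(l, s), ?_⟩
    have hmem : (c', h' c') ∈ {z : (Fin n' → ℝ) × (Fin n' → ℝ) |
        ∀ j, 0 ≤ cval (fam (l, s) j) z} := hls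
    have heq : h' c' = (F₀ (l, s)).mulVec c' + f₀ (l, s) := hF₀ (l, s) _ hmem
    apply (hG' (l, s) c').mpr
    intro j
    have := hls j
    rw [← heq]
    exact this
end

section
/- Let h : ℝⁿ → ℝⁿ and let F̄ ∈ ℝ^{n×n} be a nonnegative matrix such that |h(c₁) − h(c₂)| ≤ F̄ |c₁ − c₂| entrywise for all c₁, c₂ ∈ ℝⁿ. Let W₁ ∈ ℝ^{n'×n'}, W₂ ∈ ℝ^{n'×n}, W₃ ∈ ℝ^{n×n'}, and set A := |W₁| + |W₂| F̄ |W₃| with ρ := ρ(A). Suppose α ∈ ℝ^{n'} has all entries strictly positive and αᵀ A = ρ αᵀ (a positive left eigenvector of A for its spectral radius). Then for any w̄ ∈ ℝⁿ, c ∈ ℝ^{n'}, and m ∈ ((0,∞])^{n'}, the map T(x) := [W₁ x + W₂ h(W₃ x + w̄) + c]₀^m satisfies αᵀ |T(x) − T(x̂)| ≤ ρ · αᵀ |x − x̂| for all x, x̂ ∈ ℝ^{n'}; i.e., T is ρ-Lipschitz in the weighted norm ‖v‖_α := αᵀ|v|. -/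
open Matrix

/-- Spectral radius of a real matrix: the largest modulus of its complex eigenvalues. -/
noncomputable def specRad {n : ℕ} (A : Matrix (Fin n) (Fin n) ℝ) : ℝ :=
  (spectralRadius ℂ (A.map (Complex.ofReal ·))).toReal

/-- The comparison matrix `|W₁| + |W₂| F̄ |W₃|`, with `|·|` the entrywise absolute value. -/
noncomputable def gainMat {n n' : ℕ} (W₁ : Matrix (Fin n') (Fin n') ℝ)
    (W₂ : Matrix (Fin n') (Fin n) ℝ) (W₃ : Matrix (Fin n) (Fin n') ℝ)
    (Fbar : Matrix (Fin n) (Fin n) ℝ) : Matrix (Fin n') (Fin n') ℝ :=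
  W₁.map (fun a => |a|) + W₂.map (fun a => |a|) * Fbar * W₃.map (fun a => |a|)

/-- The map `T(x) = [W₁ x + W₂ h(W₃ x + w̄) + c]₀^m`. -/
noncomputable def Tmap {n n' : ℕ} (W₁ : Matrix (Fin n') (Fin n') ℝ)
    (W₂ : Matrix (Fin n') (Fin n) ℝ) (W₃ : Matrix (Fin n) (Fin n') ℝ)
    (h : (Fin n → ℝ) → (Fin n → ℝ)) (wbar : Fin n → ℝ) (c : Fin n' → ℝ)
    (m : Fin n' → ENNReal) (x : Fin n' → ℝ) : Fin n' → ℝ :=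
  fun i => clampE (m i) ((W₁.mulVec x + W₂.mulVec (h (W₃.mulVec x + wbar)) + c) i)

/-- `clampE m` is 1-Lipschitz. -/
lemma clampE_lip (m : ENNReal) (a b : ℝ) : |clampE m a - clampE m b| ≤ |a - b| := by
  unfold clampE
  split
  · exact abs_max_sub_max_le_abs a b 0
  · have h1 : |min (max a 0) m.toReal - min (max b 0) m.toReal| ≤ |max a 0 - max b 0| := by
      simpa using abs_min_sub_min_le_max (max a 0) m.toReal (max b 0) m.toReal
    exact h1.trans (abs_max_sub_max_le_abs a b 0)

lemma abs_mulVec_le {p q : ℕ} (M : Matrix (Fin p) (Fin q) ℝ) (y : Fin q → ℝ) (i : Fin p) :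
    |M.mulVec y i| ≤ (M.map (fun a => |a|)).mulVec (fun j => |y j|) i := by
  simp only [Matrix.mulVec, dotProduct, Matrix.map_apply]
  calc |∑ j, M i j * y j| ≤ ∑ j, |M i j * y j| := Finset.abs_sum_le_sum_abs _ _
    _ = ∑ j, |M i j| * |y j| := by simp [abs_mul]

lemma mulVec_mono {p q : ℕ} (M : Matrix (Fin p) (Fin q) ℝ) (hM : ∀ i j, 0 ≤ M i j)
    (y z : Fin q → ℝ) (hyz : ∀ j, y j ≤ z j) (i : Fin p) :
    M.mulVec y i ≤ M.mulVec z i := by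
  simp only [Matrix.mulVec, dotProduct]
  exact Finset.sum_le_sum fun j _ => mul_le_mul_of_nonneg_left (hyz j) (hM i j)

/-- If `|h(c₁) − h(c₂)| ≤ F̄|c₁ − c₂|` entrywise (`F̄ ≥ 0`), and `α > 0` is a
left eigenvector of `A := |W₁| + |W₂| F̄ |W₃|` for its spectral radius `ρ = ρ(A)`, then
`T(x) = [W₁ x + W₂ h(W₃ x + w̄) + c]₀^m` is `ρ`-Lipschitz in the weighted norm
`‖v‖_α = αᵀ|v|`. -/
theorem clamp_map_contraction_in_weighted_norm
    {n n' : ℕ}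
    (h : (Fin n → ℝ) → (Fin n → ℝ))
    (Fbar : Matrix (Fin n) (Fin n) ℝ) (hFnn : ∀ i j, 0 ≤ Fbar i j)
    (hFlip : ∀ (c₁ c₂ : Fin n → ℝ) (i : Fin n),
      |h c₁ i - h c₂ i| ≤ Fbar.mulVec (fun j => |c₁ j - c₂ j|) i)
    (W₁ : Matrix (Fin n') (Fin n') ℝ) (W₂ : Matrix (Fin n') (Fin n) ℝ)
    (W₃ : Matrix (Fin n) (Fin n') ℝ)
    (ρ : ℝ) (hρ : ρ = specRad (gainMat W₁ W₂ W₃ Fbar))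
    (α : Fin n' → ℝ) (hα : ∀ i, 0 < α i)
    (heig : Matrix.vecMul α (gainMat W₁ W₂ W₃ Fbar) = ρ • α)
    (wbar : Fin n → ℝ) (c : Fin n' → ℝ)
    (m : Fin n' → ENNReal) (hm : ∀ i, 0 < m i) :
    ∀ x xh : Fin n' → ℝ,
      ∑ i, α i * |Tmap W₁ W₂ W₃ h wbar c m x i - Tmap W₁ W₂ W₃ h wbar c m xh i|
        ≤ ρ * ∑ i, α i * |x i - xh i| := by
  intro x xh
  set A : Matrix (Fin n') (Fin n') ℝ := gainMat W₁ W₂ W₃ Fbar with hA'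
  have hA : A = W₁.map (fun a => |a|) + W₂.map (fun a => |a|) * Fbar * W₃.map (fun a => |a|) :=
    rfl
  set v : Fin n' → ℝ := fun j => |x j - xh j| with hv
  set u : Fin n → ℝ := W₃.mulVec x + wbar
  set uh : Fin n → ℝ := W₃.mulVec xh + wbar
  have hbound : ∀ i,
      |Tmap W₁ W₂ W₃ h wbar c m x i - Tmap W₁ W₂ W₃ h wbar c m xh i| ≤ A.mulVec v i := by
    intro i
    refine (clampE_lip _ _ _).trans ?_
    have hdiff : (W₁.mulVec x + W₂.mulVec (h u) + c) i - (W₁.mulVec xh + W₂.mulVec (h uh) + c) i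
        = W₁.mulVec (x - xh) i + W₂.mulVec (h u - h uh) i := by
      simp [Matrix.mulVec_sub, Pi.add_apply, Pi.sub_apply]
      ring
    rw [hdiff]
    have t1 : |W₁.mulVec (x - xh) i| ≤ (W₁.map (fun a => |a|)).mulVec v i := by
      simpa using abs_mulVec_le W₁ (x - xh) i
    have huu : ∀ j, |u j - uh j| ≤ (W₃.map (fun a => |a|)).mulVec v j := by
      intro j
      have : u j - uh j = W₃.mulVec (x - xh) j := by
        simp [u, uh, Matrix.mulVec_sub]
      rw [this]
      simpa using abs_mulVec_le W₃ (x - xh) j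
    have hh : ∀ k, |h u k - h uh k| ≤ (Fbar * W₃.map (fun a => |a|)).mulVec v k := by
      intro k
      refine (hFlip u uh k).trans ?_
      rw [← Matrix.mulVec_mulVec]
      exact mulVec_mono Fbar hFnn _ _ huu k
    have t2 : |W₂.mulVec (h u - h uh) i|
        ≤ (W₂.map (fun a => |a|) * Fbar * W₃.map (fun a => |a|)).mulVec v i := by
      refine (abs_mulVec_le W₂ (h u - h uh) i).trans ?_
      have := mulVec_mono (W₂.map (fun a => |a|)) (by intro i j; simp [Matrix.map_apply])
        (fun k => |h u k - h uh k|) ((Fbar * W₃.map (fun a => |a|)).mulVec v)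
        (fun k => by simpa using hh k) i
      simpa [Matrix.mulVec_mulVec, Matrix.mul_assoc] using this
    calc |W₁.mulVec (x - xh) i + W₂.mulVec (h u - h uh) i|
        ≤ |W₁.mulVec (x - xh) i| + |W₂.mulVec (h u - h uh) i| := abs_add_le _ _
      _ ≤ (W₁.map (fun a => |a|)).mulVec v i
          + (W₂.map (fun a => |a|) * Fbar * W₃.map (fun a => |a|)).mulVec v i := add_le_add t1 t2
      _ = A.mulVec v i := by rw [hA, Matrix.add_mulVec]; rfl
  calc ∑ i, α i * |Tmap W₁ W₂ W₃ h wbar c m x i - Tmap W₁ W₂ W₃ h wbar c m xh i|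
      ≤ ∑ i, α i * A.mulVec v i :=
        Finset.sum_le_sum fun i _ => mul_le_mul_of_nonneg_left (hbound i) (hα i).le
    _ = α ⬝ᵥ A.mulVec v := rfl
    _ = Matrix.vecMul α A ⬝ᵥ v := Matrix.dotProduct_mulVec α A v
    _ = (ρ • α) ⬝ᵥ v := by rw [hA', heig]
    _ = ρ * ∑ i, α i * v i := by
        simp [dotProduct, Finset.mul_sum, mul_assoc]
end

section
/- Let h : ℝⁿ → ℝⁿ and let F̄ ∈ ℝ^{n×n} be a nonnegative matrix such that |h(c₁) − h(c₂)| ≤ F̄ |c₁ − c₂| entrywise for all c₁, c₂ ∈ ℝⁿ. Let W₁ ∈ ℝ^{n'×n'}, W₂ ∈ ℝ^{n'×n}, W₃ ∈ ℝ^{n×n'}, set A := |W₁| + |W₂| F̄ |W₃| and ρ := ρ(A), and assume ρ < 1 and that there exists α ∈ ℝ^{n'} with strictly positive entries such that αᵀ A = ρ αᵀ. Fix w̄ ∈ ℝⁿ, c ∈ ℝ^{n'}, m ∈ ((0,∞])^{n'}, and τ > 0, and let x* be the unique point with x* = [W₁ x* + W₂ h(W₃ x* + w̄) + c]₀^m.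 Then every differentiable x : [0,∞) → ℝ^{n'} satisfying τ ẋ(t) = −x(t) + [W₁ x(t) + W₂ h(W₃ x(t) + w̄) + c]₀^m for all t ≥ 0 obeys αᵀ|x(t) − x*| ≤ αᵀ|x(0) − x*| · e^{−(1−ρ) t/τ} for all t ≥ 0; in particular the dynamics is globally exponentially stable toward x*. -/
open Matrix

lemma Tmap_entry_bound {n n' : ℕ}
    (h : (Fin n → ℝ) → (Fin n → ℝ))
    (Fbar : Matrix (Fin n) (Fin n) ℝ) (hFnn : ∀ i j, 0 ≤ Fbar i j)
    (hFlip : ∀ (c₁ c₂ : Fin n → ℝ) (i : Fin n),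
      |h c₁ i - h c₂ i| ≤ Fbar.mulVec (fun j => |c₁ j - c₂ j|) i)
    (W₁ : Matrix (Fin n') (Fin n') ℝ) (W₂ : Matrix (Fin n') (Fin n) ℝ)
    (W₃ : Matrix (Fin n) (Fin n') ℝ)
    (wbar : Fin n → ℝ) (c : Fin n' → ℝ) (m : Fin n' → ENNReal)
    (u v : Fin n' → ℝ) (i : Fin n') :
    |Tmap W₁ W₂ W₃ h wbar c m u i - Tmap W₁ W₂ W₃ h wbar c m v i|
      ≤ (gainMat W₁ W₂ W₃ Fbar).mulVec (fun j => |u j - v j|) i := by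
  set w : Fin n' → ℝ := fun j => |u j - v j| with hw
  set a := h (W₃.mulVec u + wbar) with ha
  set b := h (W₃.mulVec v + wbar) with hb
  have key : |(W₁.mulVec u + W₂.mulVec a + c) i - (W₁.mulVec v + W₂.mulVec b + c) i|
      ≤ (gainMat W₁ W₂ W₃ Fbar).mulVec w i := by
    have e1 : (W₁.mulVec u + W₂.mulVec a + c) i - (W₁.mulVec v + W₂.mulVec b + c) i
        = (∑ j, W₁ i j * (u j - v j)) + ∑ j, W₂ i j * (a j - b j) := by
      simp [Matrix.mulVec, dotProduct, mul_sub, Finset.sum_sub_distrib]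
      ring
    have hp : ∀ j, |(W₃.mulVec u + wbar) j - (W₃.mulVec v + wbar) j|
        ≤ (W₃.map (fun x => |x|)).mulVec w j := by
      intro j
      simp only [Pi.add_apply, add_sub_add_right_eq_sub, Matrix.mulVec, dotProduct,
        Matrix.map_apply, ← Finset.sum_sub_distrib, ← mul_sub]
      exact (Finset.abs_sum_le_sum_abs _ _).trans (le_of_eq (by simp [abs_mul, hw]))
    have hab : ∀ k, |a k - b k| ≤ Fbar.mulVec ((W₃.map (fun x => |x|)).mulVec w) k := by
      intro k
      refine (hFlip _ _ k).trans ?_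
      simp only [Matrix.mulVec, dotProduct]
      exact Finset.sum_le_sum fun j _ => mul_le_mul_of_nonneg_left (hp j) (hFnn k j)
    rw [e1]
    calc |(∑ j, W₁ i j * (u j - v j)) + ∑ j, W₂ i j * (a j - b j)|
        ≤ |∑ j, W₁ i j * (u j - v j)| + |∑ j, W₂ i j * (a j - b j)| := abs_add_le _ _
      _ ≤ (∑ j, |W₁ i j| * w j) + ∑ j, |W₂ i j| * |a j - b j| := by
          refine add_le_add ((Finset.abs_sum_le_sum_abs _ _).trans (le_of_eq (by simp [abs_mul, hw])))
            ((Finset.abs_sum_le_sum_abs _ _).trans (le_of_eq (by simp [abs_mul])))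
      _ ≤ (∑ j, |W₁ i j| * w j)
          + ∑ j, |W₂ i j| * (Fbar.mulVec ((W₃.map (fun x => |x|)).mulVec w)) j := by
          refine add_le_add_right (Finset.sum_le_sum fun j _ =>
            mul_le_mul_of_nonneg_left (hab j) (abs_nonneg _)) _
      _ = (gainMat W₁ W₂ W₃ Fbar).mulVec w i := by
          rw [gainMat, Matrix.add_mulVec, Pi.add_apply, ← Matrix.mulVec_mulVec,
            ← Matrix.mulVec_mulVec]
          simp [Matrix.mulVec, dotProduct, Matrix.map_apply, hw]
  simpa [Tmap] using (clampE_lip (m i) _ _).trans key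

lemma Tmap_contract {n n' : ℕ}
    (h : (Fin n → ℝ) → (Fin n → ℝ))
    (Fbar : Matrix (Fin n) (Fin n) ℝ) (hFnn : ∀ i j, 0 ≤ Fbar i j)
    (hFlip : ∀ (c₁ c₂ : Fin n → ℝ) (i : Fin n),
      |h c₁ i - h c₂ i| ≤ Fbar.mulVec (fun j => |c₁ j - c₂ j|) i)
    (W₁ : Matrix (Fin n') (Fin n') ℝ) (W₂ : Matrix (Fin n') (Fin n) ℝ)
    (W₃ : Matrix (Fin n) (Fin n') ℝ)
    (ρ : ℝ) (α : Fin n' → ℝ) (hα : ∀ i, 0 < α i)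
    (heig : Matrix.vecMul α (gainMat W₁ W₂ W₃ Fbar) = ρ • α)
    (wbar : Fin n → ℝ) (c : Fin n' → ℝ) (m : Fin n' → ENNReal)
    (u v : Fin n' → ℝ) :
    ∑ i, α i * |Tmap W₁ W₂ W₃ h wbar c m u i - Tmap W₁ W₂ W₃ h wbar c m v i|
      ≤ ρ * ∑ i, α i * |u i - v i| := by
  set w : Fin n' → ℝ := fun j => |u j - v j| with hw
  have h1 : ∑ i, α i * |Tmap W₁ W₂ W₃ h wbar c m u i - Tmap W₁ W₂ W₃ h wbar c m v i|
      ≤ ∑ i, α i * (gainMat W₁ W₂ W₃ Fbar).mulVec w i :=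
    Finset.sum_le_sum fun i _ => mul_le_mul_of_nonneg_left
      (Tmap_entry_bound h Fbar hFnn hFlip W₁ W₂ W₃ wbar c m u v i) (hα i).le
  have h2 : ∑ i, α i * (gainMat W₁ W₂ W₃ Fbar).mulVec w i = ρ * ∑ i, α i * w i := by
    have h3 : α ⬝ᵥ ((gainMat W₁ W₂ W₃ Fbar).mulVec w) = (ρ • α) ⬝ᵥ w := by
      rw [Matrix.dotProduct_mulVec, heig]
    simpa [dotProduct, Finset.mul_sum, mul_assoc] using h3
  exact h1.trans_eq h2

/-- Under the entrywise Lipschitz bound `|h(c₁) − h(c₂)| ≤ F̄|c₁ − c₂|`,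
with `A = |W₁| + |W₂| F̄ |W₃|`, `ρ = ρ(A) < 1` and a positive left eigenvector `α` of `A`
for `ρ`, every solution of `τ ẋ = −x + [W₁ x + W₂ h(W₃ x + w̄) + c]₀^m` on `[0,∞)` satisfies
`αᵀ|x(t) − x*| ≤ αᵀ|x(0) − x*| e^{−(1−ρ)t/τ}`, where `x*` is the unique fixed point:
global exponential stability toward `x*`. -/
theorem clamp_dynamics_GES
    {n n' : ℕ}
    (h : (Fin n → ℝ) → (Fin n → ℝ))
    (Fbar : Matrix (Fin n) (Fin n) ℝ) (hFnn : ∀ i j, 0 ≤ Fbar i j)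
    (hFlip : ∀ (c₁ c₂ : Fin n → ℝ) (i : Fin n),
      |h c₁ i - h c₂ i| ≤ Fbar.mulVec (fun j => |c₁ j - c₂ j|) i)
    (W₁ : Matrix (Fin n') (Fin n') ℝ) (W₂ : Matrix (Fin n') (Fin n) ℝ)
    (W₃ : Matrix (Fin n) (Fin n') ℝ)
    (ρ : ℝ) (hρ : ρ = specRad (gainMat W₁ W₂ W₃ Fbar)) (hρ1 : ρ < 1)
    (α : Fin n' → ℝ) (hα : ∀ i, 0 < α i)
    (heig : Matrix.vecMul α (gainMat W₁ W₂ W₃ Fbar) = ρ • α)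
    (wbar : Fin n → ℝ) (c : Fin n' → ℝ)
    (m : Fin n' → ENNReal) (hm : ∀ i, 0 < m i)
    (τ : ℝ) (hτ : 0 < τ)
    (xstar : Fin n' → ℝ)
    (hstar : xstar = Tmap W₁ W₂ W₃ h wbar c m xstar)
    (hstaru : ∀ y : Fin n' → ℝ, y = Tmap W₁ W₂ W₃ h wbar c m y → y = xstar)
    (x : ℝ → (Fin n' → ℝ))
    (hx : ∀ t ∈ Set.Ici (0:ℝ),
      HasDerivWithinAt x (τ⁻¹ • (-(x t) + Tmap W₁ W₂ W₃ h wbar c m (x t)))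
        (Set.Ici (0:ℝ)) t) :
    ∀ t ≥ (0:ℝ),
      ∑ i, α i * |x t i - xstar i|
        ≤ (∑ i, α i * |x 0 i - xstar i|) * Real.exp (-(1 - ρ) * t / τ) := by
  intro T hT
  have hcm := Tmap_contract h Fbar hFnn hFlip W₁ W₂ W₃ ρ α hα heig wbar c m
  set g : ℝ → ℝ := fun t => ∑ i, α i * |x t i - xstar i| with hg
  set k : ℝ := (1 - ρ) / τ with hk
  show g T ≤ g 0 * Real.exp (-(1 - ρ) * T / τ)
  have hxc : ContinuousOn x (Set.Icc 0 T) := fun t ht =>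
    ((hx t ht.1).continuousWithinAt).mono (fun z hz => hz.1)
  have hgc : ContinuousOn g (Set.Icc 0 T) := by
    apply continuousOn_finset_sum
    intro i _
    exact continuousOn_const.mul (((continuous_apply i).comp_continuousOn hxc).sub
      continuousOn_const).abs
  have hg0 : 0 ≤ g 0 := Finset.sum_nonneg fun i _ => mul_nonneg (hα i).le (abs_nonneg _)
  have hdini : ∀ t ∈ Set.Ico (0:ℝ) T, ∀ r : ℝ, -k * g t < r →
      ∃ᶠ z in nhdsWithin t (Set.Ioi t), slope g t z < r := by
    intro t ht r hr
    set d : Fin n' → ℝ := τ⁻¹ • (-(x t) + Tmap W₁ W₂ W₃ h wbar c m (x t)) with hd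
    have hslope : Filter.Tendsto (slope x t) (nhdsWithin t (Set.Ioi t)) (nhds d) := by
      have h0 := hasDerivWithinAt_iff_tendsto_slope.1 (hx t ht.1)
      exact h0.mono_left (nhdsWithin_mono t (fun z hz => ⟨le_trans ht.1 (le_of_lt hz), ne_of_gt hz⟩))
    have herr : Filter.Tendsto (fun z => ∑ i, α i * |slope x t z i - d i|)
        (nhdsWithin t (Set.Ioi t)) (nhds 0) := by
      have hφ : Continuous (fun v : Fin n' → ℝ => ∑ i, α i * |v i - d i|) := by
        apply continuous_finset_sum
        intro i _
        exact continuous_const.mul (((continuous_apply i).sub continuous_const).abs)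
      have := (hφ.tendsto d).comp hslope
      simpa [Function.comp_def] using this
    have hev1 : ∀ᶠ z in nhdsWithin t (Set.Ioi t),
        (∑ i, α i * |slope x t z i - d i|) < r + k * g t :=
      herr.eventually_lt_const (by linarith)
    have hev2 : ∀ᶠ z in nhdsWithin t (Set.Ioi t), z ∈ Set.Ioo t (t + τ) :=
      Ioo_mem_nhdsGT (by linarith)
    refine ((hev1.and hev2).mono ?_).frequently
    rintro z ⟨herrz, hz1, hz2⟩
    set s : ℝ := z - t with hs'
    have hs : 0 < s := sub_pos.2 hz1
    have hsτ : s / τ ≤ 1 := by rw [div_le_one hτ]; linarith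
    have hsτ0 : 0 ≤ s / τ := div_nonneg hs.le hτ.le
    have hco : ∀ i, |x z i - xstar i|
        ≤ ((1 - s/τ) * |x t i - xstar i|
            + (s/τ) * |Tmap W₁ W₂ W₃ h wbar c m (x t) i - xstar i|)
          + s * |slope x t z i - d i| := by
      intro i
      have hdi : d i = τ⁻¹ * (-(x t i) + Tmap W₁ W₂ W₃ h wbar c m (x t) i) := rfl
      have hsl : slope x t z i = s⁻¹ * (x z i - x t i) := by
        simp [slope, hs', vsub_eq_sub]
      have e2 : x z i - xstar i
          = ((1 - s/τ) * (x t i - xstar i)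
              + (s/τ) * (Tmap W₁ W₂ W₃ h wbar c m (x t) i - xstar i))
            + s * (slope x t z i - d i) := by
        rw [hsl, hdi]
        field_simp
        ring
      rw [e2]
      refine (abs_add_le _ _).trans (add_le_add ((abs_add_le _ _).trans (add_le_add ?_ ?_)) ?_)
      · rw [abs_mul, abs_of_nonneg (by linarith : (0:ℝ) ≤ 1 - s/τ)]
      · rw [abs_mul, abs_of_nonneg hsτ0]
      · rw [abs_mul, abs_of_nonneg hs.le]
    have hc2 : ∑ i, α i * |Tmap W₁ W₂ W₃ h wbar c m (x t) i - xstar i| ≤ ρ * g t := by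
      have := hcm (x t) xstar
      rwa [← hstar] at this
    have hgz : g z ≤ ((1 - s/τ) * g t + (s/τ) * (ρ * g t))
        + s * (∑ i, α i * |slope x t z i - d i|) := by
      have hsum := Finset.sum_le_sum
        (fun i (_ : i ∈ Finset.univ) => mul_le_mul_of_nonneg_left (hco i) (hα i).le)
      have e3 : ∑ i, α i * (((1 - s/τ) * |x t i - xstar i|
            + (s/τ) * |Tmap W₁ W₂ W₃ h wbar c m (x t) i - xstar i|)
            + s * |slope x t z i - d i|)
          = ((1 - s/τ) * g t
            + (s/τ) * ∑ i, α i * |Tmap W₁ W₂ W₃ h wbar c m (x t) i - xstar i|)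
            + s * ∑ i, α i * |slope x t z i - d i| := by
        simp only [hg, Finset.mul_sum, mul_add, Finset.sum_add_distrib]
        congr 1
        · congr 1 <;> exact Finset.sum_congr rfl (fun i _ => by ring)
        · exact Finset.sum_congr rfl (fun i _ => by ring)
      calc g z ≤ _ := hsum
        _ = _ := e3
        _ ≤ ((1 - s/τ) * g t + (s/τ) * (ρ * g t))
            + s * (∑ i, α i * |slope x t z i - d i|) := by
          gcongr
    rw [slope_def_field, div_lt_iff₀ hs]
    have e4 : ((1 - s/τ) * g t + (s/τ) * (ρ * g t))
        + s * (∑ i, α i * |slope x t z i - d i|) - g t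
        = s * ((∑ i, α i * |slope x t z i - d i|) - k * g t) := by
      rw [hk]; field_simp; ring
    have h5 : s * ((∑ i, α i * |slope x t z i - d i|) - k * g t) < s * r :=
      mul_lt_mul_of_pos_left (by linarith) hs
    have h7 := sub_le_sub_right hgz (g t)
    rw [e4] at h7
    rw [mul_comm r s]
    exact lt_of_le_of_lt h7 h5
  have main : ∀ ε : ℝ, 0 < ε → g T ≤ (g 0 + ε) * Real.exp ((ε - k) * T) := by
    intro ε hε
    have hBd : ∀ t : ℝ, HasDerivAt (fun t => (g 0 + ε) * Real.exp ((ε - k) * t))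
        ((ε - k) * ((g 0 + ε) * Real.exp ((ε - k) * t))) t := by
      intro t
      have h1 : HasDerivAt (fun t : ℝ => (ε - k) * t) (ε - k) t := by
        simpa using (hasDerivAt_id t).const_mul (ε - k)
      have h2 := (h1.exp).const_mul (g 0 + ε)
      exact h2.congr_deriv (by ring)
    have hBpos : ∀ t : ℝ, 0 < (g 0 + ε) * Real.exp ((ε - k) * t) := by
      intro t; positivity
    have := image_le_of_liminf_slope_right_lt_deriv_boundary' (f := g)
      (f' := fun t => -k * g t) hgc hdini
      (B := fun t => (g 0 + ε) * Real.exp ((ε - k) * t))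
      (B' := fun t => (ε - k) * ((g 0 + ε) * Real.exp ((ε - k) * t)))
      (by simpa using (by linarith : g 0 ≤ g 0 + ε))
      (Continuous.continuousOn (continuous_const.mul
        (Real.continuous_exp.comp (continuous_const.mul continuous_id))))
      (fun t _ => (hBd t).hasDerivWithinAt)
      (by
        intro t ht heq
        have heq' : g t = (g 0 + ε) * Real.exp ((ε - k) * t) := heq
        show -k * g t < (ε - k) * ((g 0 + ε) * Real.exp ((ε - k) * t))
        rw [heq']
        nlinarith [mul_pos hε (hBpos t)])
    exact this ⟨hT, le_rfl⟩
  have hlim : Filter.Tendsto (fun ε : ℝ => (g 0 + ε) * Real.exp ((ε - k) * T))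
      (nhdsWithin 0 (Set.Ioi 0)) (nhds (g 0 * Real.exp (-k * T))) := by
    have hc : Continuous fun ε : ℝ => (g 0 + ε) * Real.exp ((ε - k) * T) :=
      (continuous_const.add continuous_id).mul
        (Real.continuous_exp.comp ((continuous_id.sub continuous_const).mul continuous_const))
    have h8 : Filter.Tendsto (fun ε : ℝ => (g 0 + ε) * Real.exp ((ε - k) * T))
        (nhdsWithin 0 (Set.Ioi 0)) (nhds ((g 0 + 0) * Real.exp ((0 - k) * T))) :=
      (hc.tendsto 0).mono_left nhdsWithin_le_nhds
    simpa [zero_sub, neg_mul] using h8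
  have hfin : g T ≤ g 0 * Real.exp (-k * T) :=
    ge_of_tendsto hlim (Filter.eventually_of_mem self_mem_nhdsWithin fun ε hε => main ε hε)
  have he : -(1 - ρ) * T / τ = -k * T := by rw [hk]; ring
  rw [he]
  exact hfin
end

section
/- Let A ∈ ℝ^{n×n} be entrywise nonnegative and suppose α ∈ ℝⁿ has strictly positive entries and satisfies αᵀ A = ρ αᵀ for some ρ ≥ 0. Let τ > 0 and let B : [0,∞) → ℝ^{n×n} be such that |B(t)| ≤ A entrywise for all t ≥ 0. Then every differentiable ξ : [0,∞) → ℝⁿ satisfying τ ξ̇(t) = B(t) ξ(t) for all t ≥ 0 obeys αᵀ|ξ(t)| ≤ αᵀ|ξ(0)| · e^{ρ t/τ} for all t ≥ 0. -/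
open Matrix

/-- (Gronwall-type comparison lemma.) If `A ≥ 0` entrywise, `α > 0` with
`αᵀ A = ρ αᵀ` for some `ρ ≥ 0`, `τ > 0`, and `|B(t)| ≤ A` entrywise for all `t ≥ 0`, then
every differentiable solution of `τ ξ̇(t) = B(t) ξ(t)` on `[0,∞)` obeys
`αᵀ|ξ(t)| ≤ αᵀ|ξ(0)| e^{ρ t/τ}`. -/
theorem weighted_abs_gronwall_bound
    {n : ℕ} (A : Matrix (Fin n) (Fin n) ℝ) (hA : ∀ i j, 0 ≤ A i j)
    (α : Fin n → ℝ) (hα : ∀ i, 0 < α i)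
    (ρ : ℝ) (hρ : 0 ≤ ρ)
    (heig : Matrix.vecMul α A = ρ • α)
    (τ : ℝ) (hτ : 0 < τ)
    (B : ℝ → Matrix (Fin n) (Fin n) ℝ)
    (hB : ∀ t ≥ (0:ℝ), ∀ i j, |B t i j| ≤ A i j)
    (ξ : ℝ → (Fin n → ℝ))
    (hξ : ∀ t ∈ Set.Ici (0:ℝ),
      HasDerivWithinAt ξ (τ⁻¹ • (B t).mulVec (ξ t)) (Set.Ici (0:ℝ)) t) :
    ∀ t ≥ (0:ℝ),
      ∑ i, α i * |ξ t i| ≤ (∑ i, α i * |ξ 0 i|) * Real.exp (ρ * t / τ) := by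
  intro T hT
  set g : ℝ → (Fin n → ℝ) := fun t => τ⁻¹ • (B t).mulVec (ξ t) with hg
  set V : ℝ → ℝ := fun t => ∑ i, α i * |ξ t i| with hV
  -- eigenvector identity, componentwise
  have heig' : ∀ j, (∑ i, α i * A i j) = ρ * α j := by
    intro j
    have := congrFun heig j
    simpa [Matrix.vecMul, dotProduct] using this
  -- continuity of ξ and V
  have hcont : ContinuousOn ξ (Set.Ici (0:ℝ)) := fun t ht =>
    (hξ t ht).continuousWithinAt
  have hVcont : ContinuousOn V (Set.Icc 0 T) := by
    apply ContinuousOn.mono _ Set.Icc_subset_Ici_self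
    exact continuousOn_finset_sum _ fun i _ =>
      continuousOn_const.mul (((continuous_apply i).comp_continuousOn hcont).abs)
  -- the derivative bound
  have hbound : ∀ t ∈ Set.Ico (0:ℝ) T,
      (∑ i, α i * |g t i|) ≤ (ρ / τ) * V t + 0 := by
    intro t ht
    have h1 : ∀ i, |g t i| ≤ τ⁻¹ * ∑ j, A i j * |ξ t j| := by
      intro i
      have : g t i = τ⁻¹ * ∑ j, B t i j * ξ t j := by
        simp [hg, Matrix.mulVec, dotProduct]
      rw [this, abs_mul, abs_of_pos (inv_pos.2 hτ)]
      refine mul_le_mul_of_nonneg_left ?_ (le_of_lt (inv_pos.2 hτ))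
      calc |∑ j, B t i j * ξ t j| ≤ ∑ j, |B t i j * ξ t j| := Finset.abs_sum_le_sum_abs _ _
        _ ≤ ∑ j, A i j * |ξ t j| := by
            refine Finset.sum_le_sum fun j _ => ?_
            rw [abs_mul]
            exact mul_le_mul_of_nonneg_right (hB t ht.1 i j) (abs_nonneg _)
    calc (∑ i, α i * |g t i|)
        ≤ ∑ i, α i * (τ⁻¹ * ∑ j, A i j * |ξ t j|) :=
          Finset.sum_le_sum fun i _ => mul_le_mul_of_nonneg_left (h1 i) (le_of_lt (hα i))
      _ = τ⁻¹ * ∑ j, (∑ i, α i * A i j) * |ξ t j| := by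
          simp only [Finset.mul_sum, Finset.sum_mul]
          rw [Finset.sum_comm]
          exact Finset.sum_congr rfl fun j _ => Finset.sum_congr rfl fun i _ => by ring
      _ = τ⁻¹ * ∑ j, (ρ * α j) * |ξ t j| := by
          congr 1
          exact Finset.sum_congr rfl fun j _ => by rw [heig' j]
      _ = (ρ / τ) * V t + 0 := by
          simp only [hV, Finset.mul_sum]
          rw [add_zero]
          exact Finset.sum_congr rfl fun j _ => by ring
  -- the liminf slope condition
  have hslope : ∀ t ∈ Set.Ico (0:ℝ) T, ∀ r, (∑ i, α i * |g t i|) < r →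
      ∃ᶠ z in nhdsWithin t (Set.Ioi t), (z - t)⁻¹ * (V z - V t) < r := by
    intro t ht r hr
    have hd : HasDerivWithinAt ξ (g t) (Set.Ici t) t :=
      (hξ t ht.1).mono (Set.Ici_subset_Ici.2 ht.1)
    have htend : Filter.Tendsto (slope ξ t) (nhdsWithin t (Set.Ici t \ {t})) (nhds (g t)) :=
      hasDerivWithinAt_iff_tendsto_slope.mp hd
    have htend' : Filter.Tendsto (slope ξ t) (nhdsWithin t (Set.Ioi t)) (nhds (g t)) :=
      htend.mono_left (nhdsWithin_mono t fun z hz => ⟨Set.mem_Ici.2 (le_of_lt hz), ne_of_gt hz⟩)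
    have htendV : Filter.Tendsto (fun z => ∑ i, α i * |slope ξ t z i|)
        (nhdsWithin t (Set.Ioi t)) (nhds (∑ i, α i * |g t i|)) := by
      refine tendsto_finset_sum _ fun i _ => Filter.Tendsto.const_mul _ ?_
      exact (((continuous_apply i).tendsto (g t)).comp htend').abs
    have hev : ∀ᶠ z in nhdsWithin t (Set.Ioi t),
        (fun z => ∑ i, α i * |slope ξ t z i|) z < r := htendV.eventually_lt_const hr
    have hle : ∀ᶠ z in nhdsWithin t (Set.Ioi t),
        (z - t)⁻¹ * (V z - V t) ≤ ∑ i, α i * |slope ξ t z i| := by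
      filter_upwards [self_mem_nhdsWithin] with z hz
      have hzt : (0:ℝ) < z - t := sub_pos.2 hz
      have hVd : V z - V t = ∑ i, α i * (|ξ z i| - |ξ t i|) := by
        simp only [hV, mul_sub, Finset.sum_sub_distrib]
      rw [hVd, Finset.mul_sum]
      refine Finset.sum_le_sum fun i _ => ?_
      have hsl : |slope ξ t z i| = (z - t)⁻¹ * |ξ z i - ξ t i| := by
        have : slope ξ t z i = (z - t)⁻¹ * (ξ z i - ξ t i) := by
          simp [slope, vsub_eq_sub]
        rw [this, abs_mul, abs_of_pos (inv_pos.2 hzt)]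
      rw [hsl]
      have habs : |ξ z i| - |ξ t i| ≤ |ξ z i - ξ t i| := abs_sub_abs_le_abs_sub _ _
      calc (z - t)⁻¹ * (α i * (|ξ z i| - |ξ t i|))
          ≤ (z - t)⁻¹ * (α i * |ξ z i - ξ t i|) := by
            refine mul_le_mul_of_nonneg_left ?_ (le_of_lt (inv_pos.2 hzt))
            exact mul_le_mul_of_nonneg_left habs (le_of_lt (hα i))
        _ = α i * ((z - t)⁻¹ * |ξ z i - ξ t i|) := by ring
    have : ∀ᶠ z in nhdsWithin t (Set.Ioi t), (z - t)⁻¹ * (V z - V t) < r := by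
      filter_upwards [hev, hle] with z h1 h2
      exact lt_of_le_of_lt h2 h1
    exact this.frequently
  have key := le_gronwallBound_of_liminf_deriv_right_le (f := V)
    (f' := fun t => ∑ i, α i * |g t i|) (δ := V 0) (K := ρ / τ) (ε := 0)
    hVcont hslope le_rfl hbound T (Set.mem_Icc.2 ⟨hT, le_rfl⟩)
  rw [sub_zero, gronwallBound_ε0] at key
  calc V T ≤ V 0 * Real.exp (ρ / τ * T) := key
    _ = V 0 * Real.exp (ρ * T / τ) := by rw [div_mul_eq_mul_div]
end

section
/- Let f : ℝⁿ → ℝⁿ be globally Lipschitz with Lipschitz constant L > 0 and f(0) = 0, let τ > 0, and let ψ be the global flow of τ ẋ = f(x). Assume global exponential stability of the origin: there exist k, μ > 0 such that ‖ψ(t; x)‖ ≤ k‖x‖ e^{−μ t} for all t ≥ 0 and x ∈ ℝⁿ. Then for every δ > 0 the function V̂(x) := ∫₀^δ ‖ψ(t; x)‖² dt satisfies, for all x ∈ ℝⁿ, the quadratic bounds (τ/(2L))(1 − e^{−2Lδ/τ}) ‖x‖² ≤ V̂(x) ≤ (k²/(2μ)) ‖x‖². -/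
open Set

private lemma exp_mul_integral (c : ℝ) (hc : c ≠ 0) (a b : ℝ) :
    ∫ t in a..b, Real.exp (c * t) = c⁻¹ * (Real.exp (c * b) - Real.exp (c * a)) := by
  have h : ∀ t : ℝ, HasDerivAt (fun t => c⁻¹ * Real.exp (c * t)) (Real.exp (c * t)) t := by
    intro t
    have h1 : HasDerivAt (fun t : ℝ => c * t) c t := by
      simpa using (hasDerivAt_id t).const_mul c
    have h2 : HasDerivAt (fun t : ℝ => Real.exp (c * t)) (Real.exp (c * t) * c) t :=
      (Real.hasDerivAt_exp (c * t)).comp t h1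
    have h3 := h2.const_mul c⁻¹
    rw [mul_comm (Real.exp (c * t)) c, ← mul_assoc, inv_mul_cancel₀ hc, one_mul] at h3
    exact h3
  have hint : IntervalIntegrable (fun t => Real.exp (c * t)) MeasureTheory.volume a b :=
    (Real.continuous_exp.comp (continuous_const.mul continuous_id)).intervalIntegrable a b
  rw [intervalIntegral.integral_eq_sub_of_hasDerivAt (fun t _ => h t) hint]
  ring

/-- Let `f` be globally Lipschitz with constant `L > 0`, `f(0) = 0`, and
let `ψ` be the global flow of `τ ẋ = f(x)`.  If the origin is globally exponentially stable
(`‖ψ(t; x)‖ ≤ k‖x‖ e^{−μt}` for `t ≥ 0`), then for every `δ > 0` the function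
`V̂(x) = ∫₀^δ ‖ψ(t; x)‖² dt` satisfies
`(τ/(2L))(1 − e^{−2Lδ/τ}) ‖x‖² ≤ V̂(x) ≤ (k²/(2μ)) ‖x‖²`. -/
theorem lyapunov_candidate_quadratic_bounds
    {n : ℕ} (f : EuclideanSpace ℝ (Fin n) → EuclideanSpace ℝ (Fin n))
    (L : ℝ) (hL : 0 < L)
    (hf : ∀ x y : EuclideanSpace ℝ (Fin n), ‖f x - f y‖ ≤ L * ‖x - y‖)
    (hf0 : f 0 = 0)
    (τ : ℝ) (hτ : 0 < τ)
    (ψ : ℝ → EuclideanSpace ℝ (Fin n) → EuclideanSpace ℝ (Fin n))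
    (hψ0 : ∀ x, ψ 0 x = x)
    (hψd : ∀ (t : ℝ) (x : EuclideanSpace ℝ (Fin n)),
      HasDerivAt (fun s => ψ s x) (τ⁻¹ • f (ψ t x)) t)
    (hgrp : ∀ (t s : ℝ) (x : EuclideanSpace ℝ (Fin n)), ψ t (ψ s x) = ψ (t + s) x)
    (k μ : ℝ) (hk : 0 < k) (hμ : 0 < μ)
    (hGES : ∀ t ≥ (0:ℝ), ∀ x : EuclideanSpace ℝ (Fin n),
      ‖ψ t x‖ ≤ k * ‖x‖ * Real.exp (-μ * t)) :
    ∀ δ > (0:ℝ), ∀ x : EuclideanSpace ℝ (Fin n),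
      (τ / (2 * L)) * (1 - Real.exp (-2 * L * δ / τ)) * ‖x‖ ^ 2
          ≤ ∫ t in (0:ℝ)..δ, ‖ψ t x‖ ^ 2
      ∧ ∫ t in (0:ℝ)..δ, ‖ψ t x‖ ^ 2 ≤ (k ^ 2 / (2 * μ)) * ‖x‖ ^ 2 := by
  intro δ hδ x
  have hfb : ∀ y, ‖f y‖ ≤ L * ‖y‖ := by
    intro y
    simpa [hf0] using hf y 0
  -- continuity of the flow in time
  have hcont : Continuous (fun t => ψ t x) :=
    continuous_iff_continuousAt.mpr fun t => (hψd t x).continuousAt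
  have hint : IntervalIntegrable (fun t => ‖ψ t x‖ ^ 2) MeasureTheory.volume 0 δ :=
    ((hcont.norm).pow 2).intervalIntegrable 0 δ
  -- lower pointwise bound via Grönwall on the reversed trajectory
  have hlow : ∀ t ∈ Icc (0:ℝ) δ, ‖x‖ * Real.exp (-(L / τ) * t) ≤ ‖ψ t x‖ := by
    intro t ht
    have hgd : ∀ s : ℝ,
        HasDerivAt (fun s => ψ (t - s) x) ((-1 : ℝ) • (τ⁻¹ • f (ψ (t - s) x))) s := by
      intro s
      have h1 : HasDerivAt (fun s : ℝ => t - s) (-1) s := by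
        simpa using (hasDerivAt_id s).const_sub t
      exact (hψd (t - s) x).scomp s h1
    have hgc : ContinuousOn (fun s => ψ (t - s) x) (Icc 0 t) :=
      (continuous_iff_continuousAt.mpr fun s => (hgd s).continuousAt).continuousOn
    have key := norm_le_gronwallBound_of_norm_deriv_right_le
      (f := fun s => ψ (t - s) x)
      (f' := fun s => (-1 : ℝ) • (τ⁻¹ • f (ψ (t - s) x)))
      (δ := ‖ψ t x‖) (K := L / τ) (ε := 0) (a := 0) (b := t)
      hgc (fun s _ => (hgd s).hasDerivWithinAt)
      (by simp)
      (by
        intro s _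
        have h1 : ‖(-1 : ℝ) • (τ⁻¹ • f (ψ (t - s) x))‖ = τ⁻¹ * ‖f (ψ (t - s) x)‖ := by
          rw [norm_smul, norm_smul]
          simp [abs_of_pos hτ, abs_of_pos (inv_pos.mpr hτ)]
        rw [h1]
        have h2 := hfb (ψ (t - s) x)
        have hτi : (0:ℝ) < τ⁻¹ := inv_pos.mpr hτ
        calc τ⁻¹ * ‖f (ψ (t - s) x)‖ ≤ τ⁻¹ * (L * ‖ψ (t - s) x‖) := by
              exact mul_le_mul_of_nonneg_left h2 hτi.le
          _ = L / τ * ‖ψ (t - s) x‖ + 0 := by ring)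
      t ⟨ht.1, le_refl t⟩
    rw [gronwallBound_ε0] at key
    simp only [hψ0, sub_self, sub_zero] at key
    -- key : ‖x‖ ≤ ‖ψ t x‖ * exp (L / τ * t)
    have hepos : (0:ℝ) < Real.exp (L / τ * t) := Real.exp_pos _
    rw [neg_mul, Real.exp_neg]
    calc ‖x‖ * (Real.exp (L / τ * t))⁻¹
        ≤ (‖ψ t x‖ * Real.exp (L / τ * t)) * (Real.exp (L / τ * t))⁻¹ :=
          mul_le_mul_of_nonneg_right key (by positivity)
      _ = ‖ψ t x‖ := by field_simp
  -- lower bound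
  constructor
  · have hc : (-(2 * L / τ)) ≠ 0 := neg_ne_zero.mpr (by positivity)
    have hintlow : IntervalIntegrable (fun t => ‖x‖ ^ 2 * Real.exp (-(2 * L / τ) * t))
        MeasureTheory.volume 0 δ :=
      (continuous_const.mul (Real.continuous_exp.comp
        (continuous_const.mul continuous_id))).intervalIntegrable 0 δ
    have hmono : (∫ t in (0:ℝ)..δ, ‖x‖ ^ 2 * Real.exp (-(2 * L / τ) * t))
        ≤ ∫ t in (0:ℝ)..δ, ‖ψ t x‖ ^ 2 := by
      apply intervalIntegral.integral_mono_on hδ.le hintlow hint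
      intro t ht
      have h1 := hlow t ht
      have h2 : (‖x‖ * Real.exp (-(L / τ) * t)) ^ 2 ≤ ‖ψ t x‖ ^ 2 :=
        pow_le_pow_left₀ (by positivity) h1 2
      calc ‖x‖ ^ 2 * Real.exp (-(2 * L / τ) * t)
          = (‖x‖ * Real.exp (-(L / τ) * t)) ^ 2 := by
            rw [mul_pow, sq (Real.exp _), ← Real.exp_add]
            ring_nf
        _ ≤ ‖ψ t x‖ ^ 2 := h2
    have hval : (∫ t in (0:ℝ)..δ, ‖x‖ ^ 2 * Real.exp (-(2 * L / τ) * t))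
        = (τ / (2 * L)) * (1 - Real.exp (-2 * L * δ / τ)) * ‖x‖ ^ 2 := by
      rw [intervalIntegral.integral_const_mul, exp_mul_integral _ hc]
      have he : Real.exp (-(2 * L / τ) * δ) = Real.exp (-2 * L * δ / τ) := by
        congr 1; ring
      rw [he]
      field_simp
      ring_nf
      rw [Real.exp_zero]
      ring
    linarith [hmono, hval.symm.le, hval.le]
  -- upper bound
  · have hintup : IntervalIntegrable (fun t => k ^ 2 * ‖x‖ ^ 2 * Real.exp (-(2 * μ) * t))
        MeasureTheory.volume 0 δ :=
      (continuous_const.mul (Real.continuous_exp.comp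
        (continuous_const.mul continuous_id))).intervalIntegrable 0 δ
    have hmono : (∫ t in (0:ℝ)..δ, ‖ψ t x‖ ^ 2)
        ≤ ∫ t in (0:ℝ)..δ, k ^ 2 * ‖x‖ ^ 2 * Real.exp (-(2 * μ) * t) := by
      apply intervalIntegral.integral_mono_on hδ.le hint hintup
      intro t ht
      have h1 := hGES t ht.1 x
      have h2 : ‖ψ t x‖ ^ 2 ≤ (k * ‖x‖ * Real.exp (-μ * t)) ^ 2 :=
        pow_le_pow_left₀ (norm_nonneg _) h1 2
      calc ‖ψ t x‖ ^ 2 ≤ (k * ‖x‖ * Real.exp (-μ * t)) ^ 2 := h2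
        _ = k ^ 2 * ‖x‖ ^ 2 * Real.exp (-(2 * μ) * t) := by
            rw [mul_pow, mul_pow, sq (Real.exp _), ← Real.exp_add]
            ring_nf
    have hc : (-(2 * μ)) ≠ 0 := neg_ne_zero.mpr (by positivity)
    have hval : (∫ t in (0:ℝ)..δ, k ^ 2 * ‖x‖ ^ 2 * Real.exp (-(2 * μ) * t))
        = k ^ 2 * ‖x‖ ^ 2 * ((2 * μ)⁻¹ * (1 - Real.exp (-(2 * μ) * δ))) := by
      rw [intervalIntegral.integral_const_mul, exp_mul_integral _ hc]
      field_simp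
      ring_nf
      rw [Real.exp_zero]
      ring
    have hle : k ^ 2 * ‖x‖ ^ 2 * ((2 * μ)⁻¹ * (1 - Real.exp (-(2 * μ) * δ)))
        ≤ (k ^ 2 / (2 * μ)) * ‖x‖ ^ 2 := by
      have h1 : (1 : ℝ) - Real.exp (-(2 * μ) * δ) ≤ 1 := by
        have := Real.exp_pos (-(2 * μ) * δ); linarith
      have h2 : (0:ℝ) ≤ k ^ 2 * ‖x‖ ^ 2 * (2 * μ)⁻¹ := by positivity
      calc k ^ 2 * ‖x‖ ^ 2 * ((2 * μ)⁻¹ * (1 - Real.exp (-(2 * μ) * δ)))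
          = (k ^ 2 * ‖x‖ ^ 2 * (2 * μ)⁻¹) * (1 - Real.exp (-(2 * μ) * δ)) := by ring
        _ ≤ (k ^ 2 * ‖x‖ ^ 2 * (2 * μ)⁻¹) * 1 := by
            exact mul_le_mul_of_nonneg_left h1 h2
        _ = (k ^ 2 / (2 * μ)) * ‖x‖ ^ 2 := by field_simp
    linarith [hmono, hval.le, hle]
end
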